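/- arXiv:0806.0680 — 4 statements merged into one kernel-verified Lean document; each statement's English description precedes it below -/
import Mathlib

section
/- For the symmetric group Sym_n, the identity \sum_{J \subseteq S} [Sym_n : W_J] (q-1)^{|J|} = \sum_{w \in Sym_n} q^{des(w)} holds, where S is the set of simple transpositions, W_J the parabolic (Young) subgroup generated by J, and des(w) the number of descents of w. -/
open scoped Classical
open Polynomial

/-- The Young (parabolic) subgroup of `Sym_{n+1}` generated by the simple
transpositions `s_i = (i, i+1)` for `i ∈ J`. -/
def youngSubgroup {n : ℕ} (J : Finset (Fin n)) : Subgroup (Equiv.Perm (Fin (n + 1))) :=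
  Subgroup.closure {g | ∃ i ∈ J, g = Equiv.swap (Fin.castSucc i) (Fin.succ i)}

/-- The number of descents of `w ∈ Sym_{n+1}`. -/
noncomputable def des {n : ℕ} (w : Equiv.Perm (Fin (n + 1))) : ℕ :=
  (Finset.univ.filter fun i : Fin n => w (Fin.succ i) < w (Fin.castSucc i)).card

namespace YoungAux

variable {n : ℕ}

def gapCount (J : Finset (Fin n)) (k : Fin (n + 1)) : ℕ :=
  (Finset.univ.filter fun i : Fin n => i ∉ J ∧ (i : ℕ) < (k : ℕ)).card

lemma gapCount_mono (J : Finset (Fin n)) : Monotone (gapCount J) := by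
  intro a b hab
  apply Finset.card_le_card
  intro i hi
  simp only [Finset.mem_filter] at *
  exact ⟨hi.1, hi.2.1, lt_of_lt_of_le hi.2.2 hab⟩

lemma gapCount_succ (J : Finset (Fin n)) (i : Fin n) :
    gapCount J i.succ = gapCount J i.castSucc + (if i ∈ J then 0 else 1) := by
  unfold gapCount
  have hset : (Finset.univ.filter fun j : Fin n => j ∉ J ∧ (j : ℕ) < (i.succ : ℕ)) =
      (Finset.univ.filter fun j : Fin n => j ∉ J ∧ (j : ℕ) < (i.castSucc : ℕ)) ∪
      (Finset.univ.filter fun j : Fin n => j ∉ J ∧ j = i) := by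
    ext j
    simp only [Finset.mem_filter, Finset.mem_union, Fin.val_succ, Fin.coe_castSucc,
      Nat.lt_succ_iff_lt_or_eq, Finset.mem_univ, true_and]
    constructor
    · rintro ⟨hj, h | h⟩
      · exact Or.inl ⟨hj, h⟩
      · exact Or.inr ⟨hj, Fin.val_injective h⟩
    · rintro (⟨hj, h⟩ | ⟨hj, h⟩)
      · exact ⟨hj, Or.inl h⟩
      · exact ⟨hj, Or.inr (by rw [h])⟩
  rw [hset, Finset.card_union_of_disjoint]
  · congr 1
    by_cases h : i ∈ J
    · rw [if_pos h]
      rw [Finset.card_eq_zero, Finset.filter_eq_empty_iff]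
      rintro j - ⟨hj, rfl⟩
      exact hj h
    · rw [if_neg h]
      have : (Finset.univ.filter fun j : Fin n => j ∉ J ∧ j = i) = {i} := by
        ext j; simp only [Finset.mem_filter, Finset.mem_univ, true_and, Finset.mem_singleton]
        exact ⟨fun h => h.2, by rintro rfl; exact ⟨h, rfl⟩⟩
      rw [this, Finset.card_singleton]
  · rw [Finset.disjoint_left]
    rintro j hj hj'
    simp only [Finset.mem_filter, Finset.mem_univ, true_and, Fin.coe_castSucc] at hj hj'
    rcases hj' with ⟨-, rfl⟩
    exact absurd hj.2 (lt_irrefl _)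

lemma gapCount_succ_eq_iff (J : Finset (Fin n)) (i : Fin n) :
    gapCount J i.succ = gapCount J i.castSucc ↔ i ∈ J := by
  rw [gapCount_succ]
  by_cases h : i ∈ J <;> simp [h]

/-- the subgroup of permutations preserving all blocks -/
def blockStab (J : Finset (Fin n)) : Subgroup (Equiv.Perm (Fin (n + 1))) where
  carrier := {u | ∀ k, gapCount J (u k) = gapCount J k}
  one_mem' := fun k => rfl
  mul_mem' := by
    intro a b ha hb k
    simp only [Set.mem_setOf_eq] at *
    rw [Equiv.Perm.mul_apply, ha, hb]
  inv_mem' := by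
    intro a ha k
    simp only [Set.mem_setOf_eq] at *
    have := ha (a⁻¹ k)
    rw [Equiv.Perm.inv_def, Equiv.apply_symm_apply] at this
    exact this.symm

lemma mem_blockStab {J : Finset (Fin n)} {u : Equiv.Perm (Fin (n + 1))} :
    u ∈ blockStab J ↔ ∀ k, gapCount J (u k) = gapCount J k := Iff.rfl

/-- the inversion number -/
def invCount (w : Equiv.Perm (Fin (n + 1))) : ℕ :=
  (Finset.univ.filter fun p : Fin (n + 1) × Fin (n + 1) => p.1 < p.2 ∧ w p.2 < w p.1).card

lemma swap_adj_lt {i : Fin n} {a b : Fin (n + 1)} (hab : a < b)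
    (hne : ¬(a = Fin.castSucc i ∧ b = Fin.succ i)) :
    Equiv.swap (Fin.castSucc i) (Fin.succ i) a < Equiv.swap (Fin.castSucc i) (Fin.succ i) b := by
  have hcs : (Fin.castSucc i : ℕ) + 1 = (Fin.succ i : ℕ) := by simp
  rcases eq_or_ne a (Fin.castSucc i) with ha | ha
  · have hb : b ≠ Fin.succ i := fun h => hne ⟨ha, h⟩
    have hb' : b ≠ Fin.castSucc i := by rintro rfl; exact absurd hab (by rw [ha]; exact lt_irrefl _)
    rw [ha, Equiv.swap_apply_left, Equiv.swap_apply_of_ne_of_ne hb' hb]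
    have : (Fin.castSucc i : ℕ) < (b : ℕ) := by rw [← ha]; exact hab
    have : (Fin.succ i : ℕ) ≤ (b : ℕ) := by omega
    have hlt : (Fin.succ i : ℕ) < (b : ℕ) := lt_of_le_of_ne this (fun h => hb (Fin.val_injective h).symm)
    exact hlt
  · rcases eq_or_ne a (Fin.succ i) with ha2 | ha2
    · have hb' : b ≠ Fin.castSucc i := by
        rintro rfl
        rw [ha2, Fin.lt_def] at hab
        simp at hab
      have hb : b ≠ Fin.succ i := by
        rintro rfl
        rw [ha2] at hab
        exact lt_irrefl _ hab
      rw [ha2, Equiv.swap_apply_right, Equiv.swap_apply_of_ne_of_ne hb' hb]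
      have : (Fin.succ i : ℕ) < (b : ℕ) := by rw [← ha2]; exact hab
      have : (Fin.castSucc i : ℕ) < (b : ℕ) := by omega
      exact this
    · rw [Equiv.swap_apply_of_ne_of_ne ha ha2]
      rcases eq_or_ne b (Fin.castSucc i) with hb | hb
      · rw [hb, Equiv.swap_apply_left]
        have h1 : (a : ℕ) < (Fin.castSucc i : ℕ) := by rw [← hb]; exact hab
        show (a : ℕ) < (Fin.succ i : ℕ)
        omega
      · rcases eq_or_ne b (Fin.succ i) with hb2 | hb2
        · rw [hb2, Equiv.swap_apply_right]
          have h1 : (a : ℕ) < (Fin.succ i : ℕ) := by rw [← hb2]; exact hab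
          have h2 : (a : ℕ) ≠ (Fin.castSucc i : ℕ) := fun h => ha (Fin.val_injective h)
          show (a : ℕ) < (Fin.castSucc i : ℕ)
          omega
        · rw [Equiv.swap_apply_of_ne_of_ne hb hb2]
          exact hab

lemma invCount_mul_swap_lt {w : Equiv.Perm (Fin (n + 1))} {i : Fin n}
    (hd : w (Fin.succ i) < w (Fin.castSucc i)) :
    invCount (w * Equiv.swap (Fin.castSucc i) (Fin.succ i)) < invCount w := by
  set s := Equiv.swap (Fin.castSucc i) (Fin.succ i) with hs
  set A := (Finset.univ.filter fun p : Fin (n+1) × Fin (n+1) => p.1 < p.2 ∧ (w * s) p.2 < (w * s) p.1) with hA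
  set B := (Finset.univ.filter fun p : Fin (n+1) × Fin (n+1) => p.1 < p.2 ∧ w p.2 < w p.1) with hB
  have key : ∀ p ∈ A, (s p.1, s p.2) ∈ B.erase (Fin.castSucc i, Fin.succ i) := by
    rintro ⟨a, b⟩ hp
    simp only [hA, Finset.mem_filter, Finset.mem_univ, true_and] at hp
    obtain ⟨hab, hw⟩ := hp
    have hpne : ¬(a = Fin.castSucc i ∧ b = Fin.succ i) := by
      rintro ⟨rfl, rfl⟩
      simp only [hs, Equiv.Perm.mul_apply, Equiv.swap_apply_left, Equiv.swap_apply_right] at hw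
      exact absurd hw (not_lt.mpr hd.le)
    have hlt := swap_adj_lt (i := i) hab hpne
    rw [Finset.mem_erase]
    constructor
    · intro h
      have h1 : s a = Fin.castSucc i := congrArg Prod.fst h
      have h2 : s b = Fin.succ i := congrArg Prod.snd h
      have ha' : a = Fin.succ i := by
        have := congrArg s h1
        simp only [hs, Equiv.swap_apply_self, Equiv.swap_apply_left] at this
        exact this
      have hb' : b = Fin.castSucc i := by
        have := congrArg s h2
        simp only [hs, Equiv.swap_apply_self, Equiv.swap_apply_right] at this
        exact this
      rw [ha', hb'] at hab
      exact absurd hab (not_lt.mpr ((Fin.castSucc_lt_succ (i := i))).le)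
    · simp only [hB, Finset.mem_filter, Finset.mem_univ, true_and]
      refine ⟨hlt, ?_⟩
      simpa only [Equiv.Perm.mul_apply] using hw
  have hinj : Set.InjOn (fun p : Fin (n+1) × Fin (n+1) => (s p.1, s p.2)) A := by
    rintro ⟨a, b⟩ - ⟨c, d⟩ - h
    have h1 : s a = s c := congrArg Prod.fst h
    have h2 : s b = s d := congrArg Prod.snd h
    exact Prod.ext (s.injective h1) (s.injective h2)
  have hmem : (Fin.castSucc i, Fin.succ i) ∈ B := by
    simp only [hB, Finset.mem_filter, Finset.mem_univ, true_and]
    exact ⟨(Fin.castSucc_lt_succ (i := i)), hd⟩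
  calc A.card ≤ (B.erase (Fin.castSucc i, Fin.succ i)).card :=
        Finset.card_le_card_of_injOn _ key hinj
    _ < B.card := Finset.card_erase_lt_of_mem hmem

lemma eq_one_of_strictMono {w : Equiv.Perm (Fin (n + 1))}
    (h : StrictMono (w : Fin (n + 1) → Fin (n + 1))) : w = 1 := by
  have hwf : WellFoundedLT (Fin (n + 1)) := Finite.to_wellFoundedLT
  have hid : StrictMono (id : Fin (n + 1) → Fin (n + 1)) := strictMono_id
  have heq : (w : Fin (n + 1) → Fin (n + 1)) = id :=
    (h.range_inj hid).1 (by rw [Set.range_id]; exact Set.range_eq_univ.mpr w.surjective)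
  apply Equiv.ext
  intro k
  exact congrFun heq k

lemma exists_descent_of_ne_one {w : Equiv.Perm (Fin (n + 1))} (hw : w ≠ 1) :
    ∃ i : Fin n, w (Fin.succ i) < w (Fin.castSucc i) := by
  by_contra h
  push_neg at h
  apply hw
  apply eq_one_of_strictMono
  rw [Fin.strictMono_iff_lt_succ]
  intro i
  have hne : w (Fin.castSucc i) ≠ w (Fin.succ i) :=
    fun hh => absurd (w.injective hh) ((Fin.castSucc_lt_succ (i := i))).ne
  exact lt_of_le_of_ne (h i) hne

lemma young_eq_blockStab (J : Finset (Fin n)) : youngSubgroup J = blockStab J := by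
  apply le_antisymm
  · rw [youngSubgroup, Subgroup.closure_le]
    rintro g ⟨i, hi, rfl⟩
    intro k
    have heq : gapCount J (Fin.succ i) = gapCount J (Fin.castSucc i) :=
      (gapCount_succ_eq_iff J i).mpr hi
    rcases eq_or_ne k (Fin.castSucc i) with rfl | h1
    · rw [Equiv.swap_apply_left]; exact heq
    rcases eq_or_ne k (Fin.succ i) with rfl | h2
    · rw [Equiv.swap_apply_right]; exact heq.symm
    · rw [Equiv.swap_apply_of_ne_of_ne h1 h2]
  · intro u hu
    generalize hm : invCount u = m
    induction m using Nat.strong_induction_on generalizing u with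
    | _ m ih =>
      rcases eq_or_ne u 1 with rfl | hne
      · exact Subgroup.one_mem _
      obtain ⟨i, hi⟩ := exists_descent_of_ne_one hne
      -- i is a descent; show i ∈ J
      have hiJ : i ∈ J := by
        rw [← gapCount_succ_eq_iff J i]
        have h1 : gapCount J (u (Fin.castSucc i)) = gapCount J (Fin.castSucc i) := hu _
        have h2 : gapCount J (u (Fin.succ i)) = gapCount J (Fin.succ i) := hu _
        have h3 : gapCount J (Fin.castSucc i) ≤ gapCount J (Fin.succ i) :=
          gapCount_mono J ((Fin.castSucc_lt_succ (i := i))).le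
        have h4 : gapCount J (u (Fin.succ i)) ≤ gapCount J (u (Fin.castSucc i)) :=
          gapCount_mono J hi.le
        omega
      set s := Equiv.swap (Fin.castSucc i) (Fin.succ i) with hs
      have hsJ : s ∈ youngSubgroup J := Subgroup.subset_closure ⟨i, hiJ, rfl⟩
      have hsStab : s ∈ blockStab J := by
        have := (le_antisymm (le_refl (blockStab J)) (le_refl _))
        -- s preserves gapCount
        intro k
        have heq : gapCount J (Fin.succ i) = gapCount J (Fin.castSucc i) :=
          (gapCount_succ_eq_iff J i).mpr hiJ
        rcases eq_or_ne k (Fin.castSucc i) with rfl | h1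
        · rw [hs, Equiv.swap_apply_left]; exact heq
        rcases eq_or_ne k (Fin.succ i) with rfl | h2
        · rw [hs, Equiv.swap_apply_right]; exact heq.symm
        · rw [hs, Equiv.swap_apply_of_ne_of_ne h1 h2]
      have hus : u * s ∈ blockStab J := mul_mem hu hsStab
      have hlt : invCount (u * s) < m := hm ▸ invCount_mul_swap_lt hi
      have hmem : u * s ∈ youngSubgroup J := ih _ hlt hus rfl
      have : u = (u * s) * s := by
        rw [mul_assoc, hs, Equiv.swap_mul_self, mul_one]
      rw [this]
      exact mul_mem hmem hsJ

variable (J : Finset (Fin n))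

/-- The set of permutations with no descent at any position of `J`. -/
noncomputable def noDes : Finset (Equiv.Perm (Fin (n + 1))) :=
  Finset.univ.filter fun w => ∀ i ∈ J, w (Fin.castSucc i) < w (Fin.succ i)

lemma incr_on_fiber {w : Equiv.Perm (Fin (n + 1))}
    (hw : ∀ i ∈ J, w (Fin.castSucc i) < w (Fin.succ i)) :
    ∀ d : ℕ, ∀ j k : Fin (n + 1), (k : ℕ) - (j : ℕ) = d →
      gapCount J j = gapCount J k → j < k → w j < w k := by
  intro d
  induction d using Nat.strong_induction_on with
  | _ d ih =>
    intro j k hd hgc hjk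
    have hjk' : (j : ℕ) < (k : ℕ) := hjk
    have hjn : (j : ℕ) < n := by have := k.isLt; omega
    set i : Fin n := ⟨(j : ℕ), hjn⟩ with hi
    have hcs : Fin.castSucc i = j := Fin.ext rfl
    have hsucc_le : (Fin.succ i : ℕ) ≤ (k : ℕ) := by
      simp only [Fin.val_succ, hi]
      omega
    have h1 : gapCount J j ≤ gapCount J i.succ := by
      rw [← hcs]; exact gapCount_mono J ((Fin.castSucc_lt_succ (i := i))).le
    have h2 : gapCount J i.succ ≤ gapCount J k :=
      gapCount_mono J (by rw [Fin.le_def]; exact hsucc_le)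
    have heq1 : gapCount J i.succ = gapCount J i.castSucc := by rw [hcs]; omega
    have hiJ : i ∈ J := (gapCount_succ_eq_iff J i).mp heq1
    have hstep : w j < w i.succ := by rw [← hcs]; exact hw i hiJ
    rcases eq_or_lt_of_le (show Fin.succ i ≤ k by rw [Fin.le_def]; exact hsucc_le) with heq | hlt
    · rw [← heq]; exact hstep
    · have htail : w i.succ < w k := by
        apply ih ((k : ℕ) - (Fin.succ i : ℕ)) _ i.succ k rfl _ hlt
        · simp only [Fin.val_succ, hi]; omega
        · have h3 : gapCount J j ≤ gapCount J i.succ := h1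
          omega
      exact hstep.trans htail

lemma index_youngSubgroup :
    (youngSubgroup J).index = (noDes J).card := by
  have hrep : ∀ g : Equiv.Perm (Fin (n + 1)), ∃ w ∈ noDes J,
      (QuotientGroup.mk w : _ ⧸ youngSubgroup J) = QuotientGroup.mk g := by
    intro g
    generalize hm : invCount g = m
    induction m using Nat.strong_induction_on generalizing g with
    | _ m ih =>
      by_cases hg : ∀ i ∈ J, g (Fin.castSucc i) < g (Fin.succ i)
      · exact ⟨g, Finset.mem_filter.mpr ⟨Finset.mem_univ _, hg⟩, rfl⟩
      · push_neg at hg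
        obtain ⟨i, hiJ, hge⟩ := hg
        have hne : g (Fin.succ i) ≠ g (Fin.castSucc i) :=
          fun h => absurd (g.injective h) ((Fin.castSucc_lt_succ (i := i))).ne'
        have hdesc : g (Fin.succ i) < g (Fin.castSucc i) := lt_of_le_of_ne hge hne
        set s := Equiv.swap (Fin.castSucc i) (Fin.succ i) with hs
        have hlt : invCount (g * s) < m := hm ▸ invCount_mul_swap_lt hdesc
        obtain ⟨w, hw, hmk⟩ := ih _ hlt (g * s) rfl
        refine ⟨w, hw, ?_⟩
        rw [hmk]
        apply (QuotientGroup.eq).mpr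
        have : (g * s)⁻¹ * g = s⁻¹ := by group
        rw [this]
        exact inv_mem (Subgroup.subset_closure ⟨i, hiJ, rfl⟩)
  have hinj : ∀ w ∈ noDes J, ∀ w' ∈ noDes J,
      (QuotientGroup.mk w : _ ⧸ youngSubgroup J) = QuotientGroup.mk w' → w = w' := by
    intro w hw w' hw' hmk
    simp only [noDes, Finset.mem_filter] at hw hw'
    have hu : w⁻¹ * w' ∈ blockStab J := by
      rw [← young_eq_blockStab]
      exact (QuotientGroup.eq).mp hmk
    set u := w⁻¹ * w' with hudef
    have hw'u : ∀ k, w' k = w (u k) := by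
      intro k
      simp only [hudef, Equiv.Perm.mul_apply, Equiv.Perm.inv_def, Equiv.apply_symm_apply]
    have humono : StrictMono (u : Fin (n + 1) → Fin (n + 1)) := by
      intro a b hab
      have hfa : gapCount J (u a) = gapCount J a := hu a
      have hfb : gapCount J (u b) = gapCount J b := hu b
      have hle : gapCount J a ≤ gapCount J b := gapCount_mono J hab.le
      rcases lt_or_eq_of_le hle with hltf | heqf
      · -- different fibers
        by_contra hnot
        push_neg at hnot
        have : gapCount J (u b) ≤ gapCount J (u a) := gapCount_mono J hnot
        omega
      · -- same fiber
        have hwa : w (u a) < w (u b) := by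
          rw [← hw'u a, ← hw'u b]
          exact incr_on_fiber J hw'.2 _ a b rfl heqf hab
        by_contra hnot
        push_neg at hnot
        rcases lt_or_eq_of_le hnot with hblt | hbeq
        · have : w (u b) < w (u a) :=
            incr_on_fiber J hw.2 _ (u b) (u a) rfl (by omega) hblt
          exact absurd hwa (not_lt.mpr this.le)
        · have : a = b := u.injective hbeq.symm
          exact absurd hab (by rw [this]; exact lt_irrefl _)
    have hu1 : u = 1 := eq_one_of_strictMono humono
    have : w' = w * u := by rw [hudef]; group
    rw [this, hu1, mul_one]
  -- now build the bijection
  have hbij : Function.Bijective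
      (fun w : {x // x ∈ noDes J} =>
        (QuotientGroup.mk w.1 : _ ⧸ youngSubgroup J)) := by
    constructor
    · rintro ⟨w, hw⟩ ⟨w', hw'⟩ h
      exact Subtype.ext (hinj w hw w' hw' h)
    · intro q
      obtain ⟨g, rfl⟩ := QuotientGroup.mk_surjective q
      obtain ⟨w, hw, hmk⟩ := hrep g
      exact ⟨⟨w, hw⟩, hmk⟩
  have := Nat.card_eq_of_bijective _ hbij
  rw [Subgroup.index, ← this, Nat.card_eq_fintype_card, Fintype.card_coe]

lemma lt_iff_not_lt' (w : Equiv.Perm (Fin (n + 1))) (i : Fin n) :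
    w (Fin.castSucc i) < w (Fin.succ i) ↔ ¬ (w (Fin.succ i) < w (Fin.castSucc i)) := by
  constructor
  · exact fun h => not_lt.mpr h.le
  · intro h
    rcases lt_trichotomy (w (Fin.castSucc i)) (w (Fin.succ i)) with h1 | h1 | h1
    · exact h1
    · exact absurd (w.injective h1) ((Fin.castSucc_lt_succ (i := i))).ne
    · exact absurd h1 h

lemma des_le (w : Equiv.Perm (Fin (n + 1))) : des w ≤ n := by
  unfold des
  calc _ ≤ (Finset.univ : Finset (Fin n)).card := Finset.card_filter_le _ _
    _ = n := by simp

lemma des_mul_rev (w : Equiv.Perm (Fin (n + 1))) :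
    des (w * (Fin.revPerm : Equiv.Perm (Fin (n + 1)))) = n - des w := by
  unfold des
  have hstep : (Finset.univ.filter fun i : Fin n =>
      (w * (Fin.revPerm : Equiv.Perm (Fin (n + 1)))) (Fin.succ i) <
        (w * (Fin.revPerm : Equiv.Perm (Fin (n + 1)))) (Fin.castSucc i)) =
      Finset.univ.filter fun i : Fin n =>
        ¬ (w (Fin.succ i.rev) < w (Fin.castSucc i.rev)) := by
    apply Finset.filter_congr
    intro i _
    simp only [Equiv.Perm.mul_apply, Fin.revPerm_apply, Fin.rev_succ, Fin.rev_castSucc]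
    exact lt_iff_not_lt' w i.rev
  rw [hstep]
  have hcard : (Finset.univ.filter fun i : Fin n =>
      ¬ (w (Fin.succ i.rev) < w (Fin.castSucc i.rev))).card =
      (Finset.univ.filter fun i : Fin n =>
        ¬ (w (Fin.succ i) < w (Fin.castSucc i))).card := by
    apply Finset.card_bij (fun i _ => i.rev)
    · intro a ha
      simp only [Finset.mem_filter, Finset.mem_univ, true_and] at ha ⊢
      exact ha
    · intro a _ b _ hab
      exact Fin.rev_injective hab
    · intro b hb
      refine ⟨b.rev, ?_, by simp⟩
      simp only [Finset.mem_filter, Finset.mem_univ, true_and, Fin.rev_rev] at hb ⊢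
      exact hb
  rw [hcard]
  have hsplit := Finset.card_filter_add_card_filter_not
    (s := (Finset.univ : Finset (Fin n)))
    (p := fun i : Fin n => w (Fin.succ i) < w (Fin.castSucc i))
  rw [Finset.card_univ, Fintype.card_fin] at hsplit
  have hd : des w = (Finset.univ.filter fun i : Fin n =>
      w (Fin.succ i) < w (Fin.castSucc i)).card := rfl
  omega

lemma sum_powerset_pow (A : Finset (Fin n)) :
    ∑ t ∈ A.powerset, (X - 1 : Polynomial ℤ) ^ t.card = X ^ A.card := by
  have h := Finset.prod_add (fun _ : Fin n => (X - 1 : Polynomial ℤ)) (fun _ => 1) A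
  simp only [Finset.prod_const, Finset.prod_const_one, one_pow, mul_one, sub_add_cancel] at h
  rw [← h]

end YoungAux


/-- For the symmetric group `Sym_{n+1}`, the identity
`∑_{J ⊆ S} [Sym_{n+1} : W_J] (q-1)^{|J|} = ∑_{w} q^{des(w)}` holds in `ℤ[q]`, where `S`
is the set of simple transpositions, `W_J` the Young subgroup generated by `J`, and
`des(w)` the number of descents of `w`. -/
theorem sum_parabolic_index_eq_sum_descents (n : ℕ) :
    ∑ J ∈ (Finset.univ : Finset (Fin n)).powerset,
        ((youngSubgroup J).index : Polynomial ℤ) * (X - 1) ^ J.card =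
      ∑ w : Equiv.Perm (Fin (n + 1)), X ^ des w := by
  classical
  have step1 : ∑ J ∈ (Finset.univ : Finset (Fin n)).powerset,
        ((youngSubgroup J).index : Polynomial ℤ) * (X - 1) ^ J.card =
      ∑ J ∈ (Finset.univ : Finset (Fin n)).powerset,
        ∑ w : Equiv.Perm (Fin (n + 1)),
          (if ∀ i ∈ J, w (Fin.castSucc i) < w (Fin.succ i)
            then (X - 1 : Polynomial ℤ) ^ J.card else 0) := by
    apply Finset.sum_congr rfl
    intro J _
    rw [YoungAux.index_youngSubgroup, ← Finset.sum_filter]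
    rw [Finset.sum_const, nsmul_eq_mul]
    rfl
  rw [step1, Finset.sum_comm]
  have step2 : ∀ w : Equiv.Perm (Fin (n + 1)),
      ∑ J ∈ (Finset.univ : Finset (Fin n)).powerset,
        (if ∀ i ∈ J, w (Fin.castSucc i) < w (Fin.succ i)
          then (X - 1 : Polynomial ℤ) ^ J.card else 0) = X ^ (n - des w) := by
    intro w
    set A : Finset (Fin n) :=
      Finset.univ.filter (fun i => w (Fin.castSucc i) < w (Fin.succ i)) with hA
    have hcond : ∀ J : Finset (Fin n),
        (∀ i ∈ J, w (Fin.castSucc i) < w (Fin.succ i)) ↔ J ⊆ A := by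
      intro J
      constructor
      · intro h i hi
        rw [hA, Finset.mem_filter]
        exact ⟨Finset.mem_univ _, h i hi⟩
      · intro h i hi
        have := h hi
        rw [hA, Finset.mem_filter] at this
        exact this.2
    have hrw : ∑ J ∈ (Finset.univ : Finset (Fin n)).powerset,
        (if ∀ i ∈ J, w (Fin.castSucc i) < w (Fin.succ i)
          then (X - 1 : Polynomial ℤ) ^ J.card else 0) =
        ∑ J ∈ A.powerset, (X - 1 : Polynomial ℤ) ^ J.card := by
      rw [Finset.sum_congr rfl (fun J _ => by rw [if_congr (hcond J) rfl rfl]),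
        ← Finset.sum_filter]
      congr 1
      ext J
      simp [Finset.mem_powerset, Finset.mem_filter]
    rw [hrw, YoungAux.sum_powerset_pow]
    congr 1
    -- A.card = n - des w
    have hsplit := Finset.card_filter_add_card_filter_not
      (s := (Finset.univ : Finset (Fin n)))
      (p := fun i : Fin n => w (Fin.succ i) < w (Fin.castSucc i))
    rw [Finset.card_univ, Fintype.card_fin] at hsplit
    have hAeq : A.card = (Finset.univ.filter fun i : Fin n =>
        ¬ (w (Fin.succ i) < w (Fin.castSucc i))).card := by
      rw [hA]
      congr 1
      apply Finset.filter_congr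
      intro i _
      exact YoungAux.lt_iff_not_lt' w i
    have hd : des w = (Finset.univ.filter fun i : Fin n =>
        w (Fin.succ i) < w (Fin.castSucc i)).card := rfl
    omega
  rw [Finset.sum_congr rfl (fun w _ => step2 w)]
  have hbij := Equiv.sum_comp (Equiv.mulRight (Fin.revPerm : Equiv.Perm (Fin (n + 1))))
    (fun w => (X : Polynomial ℤ) ^ des w)
  rw [← hbij]
  apply Finset.sum_congr rfl
  intro w _
  simp only [Equiv.coe_mulRight]
  rw [YoungAux.des_mul_rev]
end

section
/- For any permutation w \in Sym_n, the number of cosets of (\mathbb{Z}/2\mathbb{Z})(1,1,...,1) in (\mathbb{Z}/2\mathbb{Z})^n that are fixed by the coordinate-permutation action of w equals 2^{c(w)-1} if w has at least one cycle of odd length, and 2^{c(w)} if all cycles of w have even length, where c(w) is the number of cycles of w. -/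
open scoped Classical

/-- The diagonal subgroup of `(ℤ/2ℤ)^n` generated by `(1,1,…,1)`. -/
def diagSubgroup (n : ℕ) : AddSubgroup (Fin n → ZMod 2) :=
  AddSubgroup.closure {fun _ => 1}

/-- The coordinate-permutation action of `w ∈ Sym_n` on `(ℤ/2ℤ)^n`, as an additive
monoid homomorphism: `(w • a) i = a (w⁻¹ i)`. -/
def permCoordHom {n : ℕ} (w : Equiv.Perm (Fin n)) :
    (Fin n → ZMod 2) →+ (Fin n → ZMod 2) :=
  AddMonoidHom.mk' (fun a => a ∘ ⇑w⁻¹) (fun _ _ => rfl)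

/-- The induced action of `w` on the quotient `(ℤ/2ℤ)^n / ⟨(1,…,1)⟩`. -/
def permQuotHom {n : ℕ} (w : Equiv.Perm (Fin n)) :
    (Fin n → ZMod 2) ⧸ diagSubgroup n →+ (Fin n → ZMod 2) ⧸ diagSubgroup n :=
  QuotientAddGroup.map _ _ (permCoordHom w) (by
    rw [diagSubgroup, AddSubgroup.closure_le]
    rintro x rfl
    exact AddSubgroup.subset_closure rfl)

/-- The number of cycles of `w` (fixed points count as cycles of length 1). -/
noncomputable def cycleCount {n : ℕ} (w : Equiv.Perm (Fin n)) : ℕ :=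
  Nat.card (MulAction.orbitRel.Quotient (Subgroup.zpowers w) (Fin n))

section Aux

open MulAction Function

variable {n : ℕ} (w : Equiv.Perm (Fin n))

lemma zmod2_cases : ∀ z : ZMod 2, z = 0 ∨ z = 1 := by decide

lemma mem_diag {x : Fin n → ZMod 2} :
    x ∈ diagSubgroup n ↔ x = 0 ∨ x = fun _ => 1 := by
  constructor
  · intro hx
    rw [diagSubgroup, AddSubgroup.mem_closure_singleton] at hx
    obtain ⟨k, hk⟩ := hx
    have hk' : x = fun _ => ((k : ZMod 2)) := by
      funext i
      rw [← hk]
      simp [zsmul_eq_mul]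
    rcases zmod2_cases (k : ZMod 2) with h | h
    · left; funext i; rw [hk']; simp [h]
    · right; funext i; rw [hk']; simp [h]
  · rintro (rfl | rfl)
    · exact zero_mem _
    · exact AddSubgroup.subset_closure rfl

/-- the subgroup of vectors constant on cycles -/
def fixA : AddSubgroup (Fin n → ZMod 2) where
  carrier := {a | ∀ i, a (w i) = a i}
  zero_mem' := fun _ => rfl
  add_mem' := by intro a b ha hb i; simp only [Pi.add_apply, ha i, hb i]
  neg_mem' := by intro a ha i; simp only [Pi.neg_apply, ha i]

/-- the fixed subgroup in the quotient -/
def fixQ : AddSubgroup ((Fin n → ZMod 2) ⧸ diagSubgroup n) where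
  carrier := {q | permQuotHom w q = q}
  zero_mem' := map_zero _
  add_mem' := by
    intro a b ha hb
    simp only [Set.mem_setOf_eq, map_add] at *
    rw [ha, hb]
  neg_mem' := by
    intro a ha
    simp only [Set.mem_setOf_eq, map_neg] at *
    rw [ha]

/-- its preimage upstairs -/
def Sgrp : AddSubgroup (Fin n → ZMod 2) :=
  (fixQ w).comap (QuotientAddGroup.mk' (diagSubgroup n))

lemma zmod2_add_one_add_one : ∀ x : ZMod 2, x + 1 + 1 = x := by decide

lemma mem_Sgrp {a : Fin n → ZMod 2} :
    a ∈ Sgrp w ↔ (∀ i, a (w i) = a i) ∨ (∀ i, a (w i) = a i + 1) := by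
  have hmk : permQuotHom w (QuotientAddGroup.mk' (diagSubgroup n) a)
      = QuotientAddGroup.mk' (diagSubgroup n) (a ∘ ⇑w⁻¹) := rfl
  have key : a ∈ Sgrp w ↔ a - (a ∘ ⇑w⁻¹) ∈ diagSubgroup n := by
    rw [Sgrp, AddSubgroup.mem_comap]
    change permQuotHom w _ = _ ↔ _
    rw [hmk, QuotientAddGroup.mk'_eq_mk']
    constructor
    · rintro ⟨z, hz, hza⟩
      have : z = a - (a ∘ ⇑w⁻¹) := eq_sub_of_add_eq' hza
      exact this ▸ hz
    · intro h
      exact ⟨_, h, by abel⟩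
  rw [key, mem_diag]
  have hiff0 : (a - (a ∘ ⇑w⁻¹) = 0) ↔ ∀ i, a (w i) = a i := by
    constructor
    · intro h i
      have := congrFun h (w i)
      simp only [Pi.sub_apply, Pi.zero_apply, Function.comp_apply,
        Equiv.Perm.inv_def, Equiv.symm_apply_apply, sub_eq_zero] at this
      exact this
    · intro h
      funext i
      simp only [Pi.sub_apply, Pi.zero_apply, Function.comp_apply, sub_eq_zero]
      conv_lhs => rw [← w.apply_symm_apply i]
      exact h _
  have hiff1 : (a - (a ∘ ⇑w⁻¹) = fun _ => 1) ↔ ∀ i, a (w i) = a i + 1 := by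
    constructor
    · intro h i
      have := congrFun h (w i)
      simp only [Pi.sub_apply, Function.comp_apply, Equiv.Perm.inv_def, Equiv.symm_apply_apply] at this
      rw [sub_eq_iff_eq_add, add_comm] at this
      exact this
    · intro h
      funext i
      simp only [Pi.sub_apply, Function.comp_apply]
      rw [sub_eq_iff_eq_add, add_comm]
      conv_lhs => rw [← w.apply_symm_apply i]
      exact h _
  rw [hiff0, hiff1]

lemma fixA_pow {a : Fin n → ZMod 2} (ha : a ∈ fixA w) :
    ∀ (k : ℤ) (x : Fin n), a ((w ^ k) x) = a x := by
  have hnat : ∀ (m : ℕ) (x : Fin n), a ((w ^ m) x) = a x := by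
    intro m
    induction m with
    | zero => intro x; simp
    | succ m ih =>
      intro x
      rw [pow_succ', Equiv.Perm.mul_apply, ha _, ih]
  intro k x
  cases k with
  | ofNat m => rw [Int.ofNat_eq_coe, zpow_natCast]; exact hnat m x
  | negSucc m =>
    rw [zpow_negSucc]
    have := hnat (m + 1) (((w ^ (m+1))⁻¹) x)
    rw [← Equiv.Perm.mul_apply, mul_inv_cancel, Equiv.Perm.one_apply] at this
    exact this.symm

lemma fixA_orbit {a : Fin n → ZMod 2} (ha : a ∈ fixA w) {x y : Fin n}
    (h : x ∈ orbit (Subgroup.zpowers w) y) : a x = a y := by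
  obtain ⟨⟨u, hu⟩, rfl⟩ := h
  obtain ⟨k, rfl⟩ := Subgroup.mem_zpowers_iff.mp hu
  exact fixA_pow w ha k y

/-- vectors constant on cycles correspond to functions on the set of cycles -/
noncomputable def fixAEquiv :
    ↥(fixA w) ≃ (orbitRel.Quotient (Subgroup.zpowers w) (Fin n) → ZMod 2) where
  toFun a := fun q => Quotient.liftOn' q a.1
    (fun x y h => fixA_orbit w a.2 (orbitRel_apply.mp h))
  invFun f := ⟨fun i => f (Quotient.mk'' i), fun i => by
    have : (Quotient.mk'' (w i) : orbitRel.Quotient (Subgroup.zpowers w) (Fin n))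
        = Quotient.mk'' i :=
      Quotient.sound' (orbitRel_apply.mpr ⟨⟨w, Subgroup.mem_zpowers w⟩, rfl⟩)
    show f (Quotient.mk'' (w i)) = f (Quotient.mk'' i)
    rw [this]⟩
  left_inv a := rfl
  right_inv f := funext fun q => Quotient.inductionOn' q (fun i => rfl)

lemma card_fixA : Nat.card (fixA w) = 2 ^ cycleCount w := by
  rw [Nat.card_congr (fixAEquiv w), Nat.card_fun, cycleCount]
  congr 1
  rw [Nat.card_eq_fintype_card, ZMod.card]

lemma card_diag (hn : n ≠ 0) : Nat.card (diagSubgroup n) = 2 := by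
  haveI : Nonempty (Fin n) := ⟨⟨0, Nat.pos_of_ne_zero hn⟩⟩
  let i₀ : Fin n := Classical.arbitrary _
  have e : ↥(diagSubgroup n) ≃ ZMod 2 := {
    toFun := fun x => x.1 i₀
    invFun := fun t => ⟨fun _ => t, by
      rcases zmod2_cases t with rfl | rfl
      · exact zero_mem _
      · exact AddSubgroup.subset_closure rfl⟩
    left_inv := by
      rintro ⟨x, hx⟩
      rcases mem_diag.mp hx with rfl | rfl <;> rfl
    right_inv := fun t => rfl }
  rw [Nat.card_congr e, Nat.card_eq_fintype_card, ZMod.card]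

lemma fixA_le_Sgrp : fixA w ≤ Sgrp w := fun a ha => (mem_Sgrp w).mpr (Or.inl ha)

lemma diag_le_Sgrp : diagSubgroup n ≤ Sgrp w := by
  intro x hx
  rcases mem_diag.mp hx with rfl | rfl <;>
    exact (mem_Sgrp w).mpr (Or.inl fun i => rfl)

lemma card_fixQ_mul : Nat.card (fixQ w) * Nat.card (diagSubgroup n) = Nat.card (Sgrp w) := by
  set ψ : ↥(Sgrp w) →+ ((Fin n → ZMod 2) ⧸ diagSubgroup n) :=
    (QuotientAddGroup.mk' (diagSubgroup n)).comp (Sgrp w).subtype with hψ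
  have hrange : ψ.range = fixQ w := by
    rw [hψ, AddMonoidHom.range_comp, AddSubgroup.range_subtype]
    exact AddSubgroup.map_comap_eq_self_of_surjective
      (QuotientAddGroup.mk'_surjective _) _
  have hker : ψ.ker = (diagSubgroup n).addSubgroupOf (Sgrp w) := by
    ext x
    simp only [hψ, AddMonoidHom.mem_ker, AddMonoidHom.coe_comp, Function.comp_apply,
      AddSubgroup.coe_subtype, QuotientAddGroup.mk'_apply, QuotientAddGroup.eq_zero_iff,
      AddSubgroup.mem_addSubgroupOf]
  have h1 : Nat.card (Sgrp w) = Nat.card (↥(Sgrp w) ⧸ ψ.ker) * Nat.card ψ.ker :=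
    AddSubgroup.card_eq_card_quotient_mul_card_addSubgroup _
  have h2 : Nat.card (↥(Sgrp w) ⧸ ψ.ker) = Nat.card (fixQ w) := by
    rw [← hrange]
    exact Nat.card_congr (QuotientAddGroup.quotientKerEquivRange ψ).toEquiv
  have h3 : Nat.card ψ.ker = Nat.card (diagSubgroup n) := by
    rw [hker]
    exact Nat.card_congr (AddSubgroup.addSubgroupOfEquivOfLe (diag_le_Sgrp w)).toEquiv
  rw [h1, h2, h3]

lemma smul_fun_eq : (fun x : Fin n => w • x) = ⇑w := rfl

lemma no_anti {i : Fin n} (hi : Odd (Function.minimalPeriod ⇑w i))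
    {b : Fin n → ZMod 2} (hb : ∀ j, b (w j) = b j + 1) : False := by
  set m := Function.minimalPeriod ⇑w i with hm
  have hpow : ∀ k : ℕ, b ((w ^ k) i) = b i + (k : ZMod 2) := by
    intro k
    induction k with
    | zero => simp
    | succ k ih =>
      rw [pow_succ', Equiv.Perm.mul_apply, hb _, ih]
      push_cast
      ring
  have hfix : (w ^ m) i = i := by
    have : w ^ m • i = i := MulAction.pow_smul_eq_iff_minimalPeriod_dvd.mpr (by
      rw [hm]
      exact dvd_rfl)
    exact this
  have := hpow m
  rw [hfix, left_eq_add] at this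
  rw [ZMod.natCast_eq_zero_iff] at this
  rw [Nat.not_even_iff_odd.symm] at hi
  exact hi (even_iff_two_dvd.mpr this)

lemma exists_anti (h : ∀ i : Fin n, Even (Function.minimalPeriod ⇑w i)) :
    ∃ b : Fin n → ZMod 2, ∀ i, b (w i) = b i + 1 := by
  set Ω := orbitRel.Quotient (Subgroup.zpowers w) (Fin n)
  have hk : ∀ i : Fin n, ∃ k : ℤ, (w ^ k) ((Quotient.mk'' i : Ω).out) = i := by
    intro i
    have hq : Quotient.mk'' ((Quotient.mk'' i : Ω).out) = (Quotient.mk'' i : Ω) :=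
      Quotient.out_eq' _
    have hrel := Quotient.exact' (s₁ := orbitRel (Subgroup.zpowers w) (Fin n)) hq.symm
    obtain ⟨⟨u, hu⟩, hux⟩ := orbitRel_apply.mp hrel
    obtain ⟨k, rfl⟩ := Subgroup.mem_zpowers_iff.mp hu
    exact ⟨k, by simpa [Equiv.Perm.smul_def] using hux⟩
  choose k hkspec using fun i => hk i
  refine ⟨fun i => ((k i : ℤ) : ZMod 2), fun i => ?_⟩
  have hout : (Quotient.mk'' (w i) : Ω) = Quotient.mk'' i :=
    Quotient.sound' (orbitRel_apply.mpr ⟨⟨w, Subgroup.mem_zpowers w⟩, rfl⟩)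
  set r := (Quotient.mk'' i : Ω).out with hr
  have e1 : (w ^ (k (w i))) r = w i := by
    have := hkspec (w i)
    rwa [hout] at this
  have e2 : (w ^ (1 + k i)) r = w i := by
    rw [zpow_one_add, Equiv.Perm.mul_apply, hkspec i]
  have e3 : (w ^ (k (w i) - (1 + k i))) r = r := by
    have h0 : (w ^ (-(1 + k i))) ((w ^ (k (w i))) r)
        = (w ^ (-(1 + k i))) ((w ^ (1 + k i)) r) := by rw [e1, e2]
    rw [← Equiv.Perm.mul_apply, ← Equiv.Perm.mul_apply, ← zpow_add, ← zpow_add,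
      neg_add_cancel, zpow_zero] at h0
    rw [sub_eq_neg_add]
    rw [h0]
    rfl
  have hdvd : ((Function.minimalPeriod ⇑w r : ℕ) : ℤ) ∣ (k (w i) - (1 + k i)) := by
    have : w ^ (k (w i) - (1 + k i)) • r = r := e3
    exact MulAction.zpow_smul_eq_iff_minimalPeriod_dvd.mp this
  have h2 : (2 : ℤ) ∣ (k (w i) - (1 + k i)) := by
    obtain ⟨t, ht⟩ := h r
    refine dvd_trans ⟨t, ?_⟩ hdvd
    rw [ht]
    push_cast
    ring
  have hz : ((k (w i) - (1 + k i) : ℤ) : ZMod 2) = 0 := by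
    rw [ZMod.intCast_zmod_eq_zero_iff_dvd]
    exact_mod_cast h2
  push_cast at hz
  show ((k (w i) : ℤ) : ZMod 2) = ((k i : ℤ) : ZMod 2) + 1
  linear_combination hz

lemma Sgrp_eq_fixA (hodd : ∃ i, Odd (Function.minimalPeriod ⇑w i)) :
    Sgrp w = fixA w := by
  obtain ⟨i, hi⟩ := hodd
  apply le_antisymm _ (fixA_le_Sgrp w)
  intro a ha
  rcases (mem_Sgrp w).mp ha with h | h
  · exact h
  · exact (no_anti w hi h).elim

lemma card_Sgrp_even (hn : n ≠ 0) (h : ∀ i, Even (Function.minimalPeriod ⇑w i)) :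
    Nat.card (Sgrp w) = 2 * 2 ^ cycleCount w := by
  haveI : Nonempty (Fin n) := ⟨⟨0, Nat.pos_of_ne_zero hn⟩⟩
  let i₀ : Fin n := Classical.arbitrary _
  set χ : ↥(Sgrp w) →+ ZMod 2 := AddMonoidHom.mk' (fun a => a.1 (w i₀) - a.1 i₀)
    (by intro a b; simp only [AddSubgroup.coe_add, Pi.add_apply]; ring) with hχ
  have hsurj : Function.Surjective χ := by
    intro t
    rcases zmod2_cases t with rfl | rfl
    · exact ⟨0, map_zero χ⟩
    · obtain ⟨b, hb⟩ := exists_anti w h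
      refine ⟨⟨b, (mem_Sgrp w).mpr (Or.inr hb)⟩, ?_⟩
      show b (w i₀) - b i₀ = 1
      rw [hb i₀]
      ring
  have hker : χ.ker = (fixA w).addSubgroupOf (Sgrp w) := by
    ext ⟨a, ha⟩
    simp only [AddMonoidHom.mem_ker, AddSubgroup.mem_addSubgroupOf, hχ,
      AddMonoidHom.mk'_apply]
    constructor
    · intro h0
      rcases (mem_Sgrp w).mp ha with hA | hB
      · exact hA
      · exfalso
        rw [hB i₀] at h0
        have h1 : (1 : ZMod 2) = 0 := by linear_combination h0
        exact one_ne_zero h1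
    · intro hA
      show a (w i₀) - a i₀ = 0
      rw [hA i₀, sub_self]
  have h1 : Nat.card (Sgrp w) = Nat.card (↥(Sgrp w) ⧸ χ.ker) * Nat.card χ.ker :=
    AddSubgroup.card_eq_card_quotient_mul_card_addSubgroup _
  have h2 : Nat.card (↥(Sgrp w) ⧸ χ.ker) = 2 := by
    rw [Nat.card_congr (QuotientAddGroup.quotientKerEquivOfSurjective χ hsurj).toEquiv,
      Nat.card_eq_fintype_card, ZMod.card]
  have h3 : Nat.card χ.ker = 2 ^ cycleCount w := by
    rw [hker, Nat.card_congr (AddSubgroup.addSubgroupOfEquivOfLe (fixA_le_Sgrp w)).toEquiv,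
      card_fixA]
  rw [h1, h2, h3]

lemma card_subtype_eq : Nat.card {q : (Fin n → ZMod 2) ⧸ diagSubgroup n // permQuotHom w q = q}
    = Nat.card (fixQ w) :=
  Nat.card_congr (Equiv.subtypeEquivRight fun q => Iff.rfl)

end Aux

/-- For `w ∈ Sym_n`, the number of cosets of `(ℤ/2ℤ)(1,…,1)` in `(ℤ/2ℤ)^n` fixed by the
coordinate-permutation action of `w` equals `2^{c(w)-1}` if `w` has a cycle of odd
length, and `2^{c(w)}` if all cycles of `w` have even length. -/
theorem card_fixed_cosets {n : ℕ} (w : Equiv.Perm (Fin n)) :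
    ((∃ i : Fin n, Odd (Function.minimalPeriod ⇑w i)) →
      Nat.card {q : (Fin n → ZMod 2) ⧸ diagSubgroup n // permQuotHom w q = q} =
        2 ^ (cycleCount w - 1)) ∧
    ((∀ i : Fin n, Even (Function.minimalPeriod ⇑w i)) →
      Nat.card {q : (Fin n → ZMod 2) ⧸ diagSubgroup n // permQuotHom w q = q} =
        2 ^ cycleCount w) := by
  constructor
  · rintro ⟨i, hi⟩
    have hn : n ≠ 0 := fun h => (h ▸ i).elim0
    haveI : Nonempty (MulAction.orbitRel.Quotient (Subgroup.zpowers w) (Fin n)) :=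
      ⟨Quotient.mk'' i⟩
    have hc : 1 ≤ cycleCount w := Nat.card_pos
    have key := card_fixQ_mul w
    rw [card_diag hn, Sgrp_eq_fixA w ⟨i, hi⟩, card_fixA] at key
    rw [card_subtype_eq]
    have hpow : 2 ^ cycleCount w = 2 ^ (cycleCount w - 1) * 2 := by
      rw [← pow_succ, Nat.sub_add_cancel hc]
    exact Nat.eq_of_mul_eq_mul_right two_pos (key.trans hpow)
  · intro h
    rcases Nat.eq_zero_or_pos n with rfl | hn
    · haveI : IsEmpty (MulAction.orbitRel.Quotient (Subgroup.zpowers w) (Fin 0)) :=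
        ⟨fun q => Quotient.inductionOn' q (fun i => i.elim0)⟩
      have hc : cycleCount w = 0 := Nat.card_of_isEmpty
      haveI : Subsingleton ((Fin 0 → ZMod 2) ⧸ diagSubgroup 0) := by
        constructor
        intro a b
        obtain ⟨x, rfl⟩ := QuotientAddGroup.mk_surjective a
        obtain ⟨y, rfl⟩ := QuotientAddGroup.mk_surjective b
        congr 1
        exact Subsingleton.elim x y
      haveI : Unique {q : (Fin 0 → ZMod 2) ⧸ diagSubgroup 0 // permQuotHom w q = q} :=
        uniqueOfSubsingleton ⟨0, map_zero _⟩
      rw [hc, pow_zero, Nat.card_unique]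
    · have hn' : n ≠ 0 := Nat.pos_iff_ne_zero.mp hn
      have key := card_fixQ_mul w
      rw [card_diag hn', card_Sgrp_even w hn' h, mul_comm 2 (2 ^ cycleCount w)] at key
      rw [card_subtype_eq]
      exact Nat.eq_of_mul_eq_mul_right two_pos key
end

section
/- Fix a permutation w \in Sym_n. For m \ge 0, let f_m(w) be the number of m-tuples (A_1,...,A_m) of pairwise disjoint, nonempty, w-stable subsets of \{1,...,n\}, each of even cardinality. If w contains a cycle of even length, then \sum_{m \ge 0} (-1)^m f_m(w) = 0. -/
open scoped Classical

/-- `tupleCount u m` is the number of `m`-tuples `(A₁,…,A_m)` of pairwise disjoint,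
nonempty, `u`-stable subsets of `X`, each of even cardinality. -/
noncomputable def tupleCount {X : Type*} [Fintype X] (u : Equiv.Perm X) (m : ℕ) : ℕ :=
  Nat.card {A : Fin m → Finset X //
    (Pairwise fun j k => Disjoint (A j) (A k)) ∧
    ∀ j, A j ≠ ∅ ∧ (∀ x ∈ A j, u x ∈ A j) ∧ Even (A j).card}

set_option linter.unusedSectionVars false

namespace AltSumAux

variable {X : Type*} [DecidableEq X] [Fintype X]

def Good (u : Equiv.Perm X) (A : Finset X) : Prop :=
  A ≠ ∅ ∧ (∀ x ∈ A, u x ∈ A) ∧ Even A.card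

def ValidL (u : Equiv.Perm X) (l : List (Finset X)) : Prop :=
  l.Pairwise Disjoint ∧ ∀ A ∈ l, Good u A

lemma valid_cons {u : Equiv.Perm X} {A : Finset X} {l : List (Finset X)} :
    ValidL u (A :: l) ↔ (∀ B ∈ l, Disjoint A B) ∧ Good u A ∧ ValidL u l := by
  unfold ValidL
  simp [List.pairwise_cons, and_assoc]
  tauto

def phi (C : Finset X) : List (Finset X) → List (Finset X)
  | [] => [C]
  | A :: l =>
    if C ⊆ A then
      if A = C then
        match l with
        | [] => []
        | B :: l' => (C ∪ B) :: l'
      else C :: (A \ C) :: l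
    else A :: phi C l

lemma phi_nil (C : Finset X) : phi C ([] : List (Finset X)) = [C] := rfl

lemma phi_cons_eq_nil (C : Finset X) : phi C [C] = [] := by
  simp [phi]

lemma phi_cons_eq (C B : Finset X) (l : List (Finset X)) :
    phi C (C :: B :: l) = (C ∪ B) :: l := by
  simp [phi]

lemma phi_cons_ssub (C A : Finset X) (l : List (Finset X)) (h1 : C ⊆ A) (h2 : A ≠ C) :
    phi C (A :: l) = C :: (A \ C) :: l := by
  simp [phi, h1, h2]

lemma phi_cons_nsub (C A : Finset X) (l : List (Finset X)) (h1 : ¬ C ⊆ A) :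
    phi C (A :: l) = A :: phi C l := by
  simp [phi, h1]

lemma phi_length (C : Finset X) (l : List (Finset X)) :
    (phi C l).length = l.length + 1 ∨ l.length = (phi C l).length + 1 := by
  induction l with
  | nil => simp [phi]
  | cons A l ih =>
    by_cases h1 : C ⊆ A
    · by_cases h2 : A = C
      · subst h2
        cases l with
        | nil => rw [phi_cons_eq_nil]; simp
        | cons B l' => rw [phi_cons_eq]; simp
      · rw [phi_cons_ssub C A l h1 h2]; simp
    · rw [phi_cons_nsub C A l h1]
      simp only [List.length_cons]
      omega

lemma phi_subset (C : Finset X) (l : List (Finset X)) :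
    ∀ D ∈ phi C l, ∀ x ∈ D, x ∈ C ∨ ∃ B ∈ l, x ∈ B := by
  induction l with
  | nil => simp [phi]
  | cons A l ih =>
    by_cases h1 : C ⊆ A
    · by_cases h2 : A = C
      · subst h2
        cases l with
        | nil => rw [phi_cons_eq_nil]; simp
        | cons B l' =>
          rw [phi_cons_eq]
          intro D hD x hx
          rw [List.mem_cons] at hD
          rcases hD with rfl | hD
          · rcases Finset.mem_union.1 hx with h | h
            · exact Or.inl h
            · exact Or.inr ⟨B, by simp, h⟩
          · exact Or.inr ⟨D, by simp [hD], hx⟩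
      · rw [phi_cons_ssub C A l h1 h2]
        intro D hD x hx
        rw [List.mem_cons, List.mem_cons] at hD
        rcases hD with rfl | rfl | hD
        · exact Or.inl hx
        · exact Or.inr ⟨A, by simp, (Finset.mem_sdiff.1 hx).1⟩
        · exact Or.inr ⟨D, by simp [hD], hx⟩
    · rw [phi_cons_nsub C A l h1]
      intro D hD x hx
      rw [List.mem_cons] at hD
      rcases hD with rfl | hD
      · exact Or.inr ⟨D, by simp, hx⟩
      · rcases ih D hD x hx with h | ⟨B, hB, hxB⟩
        · exact Or.inl h
        · exact Or.inr ⟨B, by simp [hB], hxB⟩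

variable {u : Equiv.Perm X} {C : Finset X}

lemma pre_of_stable {A : Finset X} (h : ∀ x ∈ A, u x ∈ A) {x : X} (hx : u x ∈ A) : x ∈ A := by
  have himg : Finset.image u A = A := by
    apply Finset.eq_of_subset_of_card_le
    · intro y hy
      rcases Finset.mem_image.1 hy with ⟨z, hz, rfl⟩
      exact h z hz
    · rw [Finset.card_image_of_injective _ u.injective]
  rw [← himg] at hx
  rcases Finset.mem_image.1 hx with ⟨z, hz, hzx⟩
  rwa [← u.injective hzx]

lemma good_union {A B : Finset X} (hA : Good u A) (hB : Good u B) (hAB : Disjoint A B) :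
    Good u (A ∪ B) := by
  obtain ⟨hA1, hA2, hA3⟩ := hA
  obtain ⟨hB1, hB2, hB3⟩ := hB
  refine ⟨?_, ?_, ?_⟩
  · simp [Finset.union_eq_empty, hA1]
  · intro x hx
    rcases Finset.mem_union.1 hx with h | h
    · exact Finset.mem_union_left _ (hA2 x h)
    · exact Finset.mem_union_right _ (hB2 x h)
  · rw [Finset.card_union_of_disjoint hAB]
    exact hA3.add hB3

lemma good_sdiff (hC : Good u C) {A : Finset X} (hA : Good u A) (hCA : C ⊆ A) (hne : A ≠ C) :
    Good u (A \ C) := by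
  obtain ⟨hA1, hA2, hA3⟩ := hA
  refine ⟨?_, ?_, ?_⟩
  · intro h
    exact hne (le_antisymm (by simpa [Finset.sdiff_eq_empty_iff_subset] using h) hCA)
  · intro x hx
    rcases Finset.mem_sdiff.1 hx with ⟨hxA, hxC⟩
    refine Finset.mem_sdiff.2 ⟨hA2 x hxA, fun hc => hxC ?_⟩
    exact pre_of_stable hC.2.1 hc
  · rw [Finset.card_sdiff_of_subset hCA]
    rw [Nat.even_sub (Finset.card_le_card hCA)]
    simp [hA3, hC.2.2]

lemma phi_valid (hC : Good u C)
    (hdich : ∀ A : Finset X, (∀ x ∈ A, u x ∈ A) → ¬C ⊆ A → Disjoint C A)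
    {l : List (Finset X)} (hl : ValidL u l) : ValidL u (phi C l) := by
  induction l with
  | nil => exact ⟨by simp [phi], by simp [phi, hC]⟩
  | cons A l ih =>
    rw [valid_cons] at hl
    obtain ⟨hdisj, hgA, hvl⟩ := hl
    by_cases h1 : C ⊆ A
    · by_cases h2 : A = C
      · subst h2
        cases l with
        | nil => rw [phi_cons_eq_nil]; exact ⟨by simp, by simp⟩
        | cons B l' =>
          rw [phi_cons_eq]
          rw [valid_cons] at hvl ⊢
          obtain ⟨hdB, hgB, hvl'⟩ := hvl
          refine ⟨?_, good_union hC hgB (hdisj B (by simp)), hvl'⟩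
          intro D hD
          exact Finset.disjoint_union_left.2 ⟨hdisj D (by simp [hD]), hdB D hD⟩
      · rw [phi_cons_ssub C A l h1 h2]
        rw [valid_cons, valid_cons]
        refine ⟨?_, hC, ?_, good_sdiff hC hgA h1 h2, hvl⟩
        · intro B hB
          rw [List.mem_cons] at hB
          rcases hB with rfl | hB
          · exact Finset.disjoint_sdiff
          · exact (hdisj B hB).mono_left h1
        · intro B hB
          exact (hdisj B hB).mono_left (Finset.sdiff_subset)
    · rw [phi_cons_nsub C A l h1]
      rw [valid_cons]
      refine ⟨?_, hgA, ih hvl⟩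
      intro D hD
      have hAC : Disjoint C A := hdich A hgA.2.1 h1
      rw [Finset.disjoint_left]
      intro x hxA hxD
      rcases phi_subset C l D hD x hxD with h | ⟨B, hB, hxB⟩
      · exact (Finset.disjoint_right.1 hAC) hxA h
      · exact (Finset.disjoint_left.1 (hdisj B hB)) hxA hxB

lemma phi_involutive (hC : Good u C) {l : List (Finset X)} (hl : ValidL u l) :
    phi C (phi C l) = l := by
  induction l with
  | nil => rw [phi_nil, phi_cons_eq_nil]
  | cons A l ih =>
    rw [valid_cons] at hl
    obtain ⟨hdisj, hgA, hvl⟩ := hl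
    by_cases h1 : C ⊆ A
    · by_cases h2 : A = C
      · cases l with
        | nil => rw [h2, phi_cons_eq_nil, phi_nil]
        | cons B l' =>
          rw [h2, phi_cons_eq]
          have hdCB : Disjoint C B := h2 ▸ hdisj B (by simp)
          have hBne : B ≠ ∅ := by
            rw [valid_cons] at hvl
            exact hvl.2.1.1
          have hne : C ∪ B ≠ C := by
            intro h
            apply hBne
            have hsub : B ⊆ C := by rw [← h]; exact Finset.subset_union_right
            ext x
            simp only [Finset.notMem_empty, iff_false]
            intro hx
            exact (Finset.disjoint_right.1 hdCB) hx (hsub hx)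
          rw [phi_cons_ssub C (C ∪ B) l' Finset.subset_union_left hne,
            Finset.union_sdiff_cancel_left hdCB]
      · rw [phi_cons_ssub C A l h1 h2, phi_cons_eq, Finset.union_sdiff_of_subset h1]
    · rw [phi_cons_nsub C A l h1, phi_cons_nsub C A _ h1, ih hvl]

lemma valid_length_le_aux : ∀ (l : List (Finset X)) (s : Finset X),
    (∀ B ∈ l, B ⊆ s) → l.Pairwise Disjoint → (∀ B ∈ l, B ≠ ∅) → l.length ≤ s.card := by
  intro l
  induction l with
  | nil => simp
  | cons A l ih =>
    intro s hsub hpw hne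
    rw [List.pairwise_cons] at hpw
    have hA : A ⊆ s := hsub A (by simp)
    have hAne : A.Nonempty := Finset.nonempty_iff_ne_empty.2 (hne A (by simp))
    have h1 : ∀ B ∈ l, B ⊆ s \ A := by
      intro B hB x hx
      refine Finset.mem_sdiff.2 ⟨hsub B (by simp [hB]) hx, fun hc => ?_⟩
      exact (Finset.disjoint_left.1 (hpw.1 B hB)) hc hx
    have h2 := ih (s \ A) h1 hpw.2 (fun B hB => hne B (by simp [hB]))
    have h3 : (s \ A).card = s.card - A.card := Finset.card_sdiff_of_subset hA
    have h4 : 1 ≤ A.card := Finset.card_pos.2 hAne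
    have h5 : A.card ≤ s.card := Finset.card_le_card hA
    simp only [List.length_cons]
    omega

lemma valid_length_le {l : List (Finset X)} (hl : ValidL u l) :
    l.length ≤ Fintype.card X := by
  have := valid_length_le_aux l Finset.univ (fun B _ => B.subset_univ) hl.1
    (fun B hB => (hl.2 B hB).1)
  simpa using this

lemma valid_finite : {l : List (Finset X) | ValidL u l}.Finite :=
  (List.finite_length_le (Finset X) (Fintype.card X)).subset
    (fun _ hl => valid_length_le hl)

noncomputable def validFinset (u : Equiv.Perm X) : Finset (List (Finset X)) :=
  (valid_finite (u := u)).toFinset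

lemma mem_validFinset {l : List (Finset X)} : l ∈ validFinset u ↔ ValidL u l :=
  Set.Finite.mem_toFinset _

lemma tupleCount_eq (u : Equiv.Perm X) (m : ℕ) :
    tupleCount u m = ((validFinset u).filter (fun l => l.length = m)).card := by
  have e : {A : Fin m → Finset X //
      (Pairwise fun j k => Disjoint (A j) (A k)) ∧
      ∀ j, A j ≠ ∅ ∧ (∀ x ∈ A j, u x ∈ A j) ∧ Even (A j).card} ≃
      {l : List (Finset X) // ValidL u l ∧ l.length = m} := by
    refine ⟨fun A => ⟨List.ofFn A.1, ⟨⟨?_, ?_⟩, by simp⟩⟩,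
      fun l => ⟨fun j => l.1.get (Fin.cast l.2.2.symm j), ⟨?_, ?_⟩⟩, ?_, ?_⟩
    · rw [List.pairwise_ofFn]
      intro i j hij
      exact A.2.1 (Fin.ne_of_lt hij)
    · intro B hB
      rw [List.mem_ofFn] at hB
      obtain ⟨j, rfl⟩ := hB
      exact A.2.2 j
    · intro j k hjk
      have hne : ((Fin.cast l.2.2.symm j : Fin l.1.length) : ℕ) ≠
          ((Fin.cast l.2.2.symm k : Fin l.1.length) : ℕ) := by
        simpa using fun h => hjk (Fin.ext h)
      rcases lt_or_gt_of_ne hne with h | h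
      · exact List.pairwise_iff_get.1 l.2.1.1 _ _ h
      · exact (List.pairwise_iff_get.1 l.2.1.1 _ _ h).symm
    · intro j
      exact l.2.1.2 _ (l.1.get_mem _)
    · intro A
      apply Subtype.ext
      funext j
      simp
    · intro l
      apply Subtype.ext
      simp only
      apply List.ext_get
      · simp [l.2.2]
      · intro k h1 h2
        simp [List.get_ofFn]
  rw [tupleCount, Nat.card_congr e]
  have hset : {l : List (Finset X) | ValidL u l ∧ l.length = m} =
      ↑((validFinset u).filter (fun l => l.length = m)) := by
    ext l
    simp [mem_validFinset]
  have h0 : Nat.card {l : List (Finset X) // ValidL u l ∧ l.length = m} =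
      Nat.card {l : List (Finset X) | ValidL u l ∧ l.length = m} := rfl
  rw [h0, Nat.card_coe_set_eq, hset, Set.ncard_coe_finset]

end AltSumAux

/-- If `w ∈ Sym_n` contains a cycle of even length, then
`∑_{m ≥ 0} (-1)^m f_m(w) = 0`, where `f_m(w)` counts `m`-tuples of pairwise disjoint
nonempty `w`-stable even-cardinality subsets of `{1,…,n}`. -/
theorem alternating_sum_tupleCount_eq_zero {n : ℕ} (w : Equiv.Perm (Fin n))
    (hw : ∃ i : Fin n, Even (Function.minimalPeriod ⇑w i)) :
    ∑ᶠ m : ℕ, ((-1 : ℤ) ^ m * tupleCount w m) = 0 := by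
  classical
  obtain ⟨i, hEven⟩ := hw
  set T := Function.minimalPeriod ⇑w i with hT
  have hTpos : 0 < T := by
    apply Function.IsPeriodicPt.minimalPeriod_pos (orderOf_pos w)
    have h1 : (w ^ orderOf w) i = i := by rw [pow_orderOf_eq_one]; rfl
    simpa [Function.IsPeriodicPt, Function.IsFixedPt,
      Equiv.Perm.iterate_eq_pow w (orderOf w)] using h1
  set C : Finset (Fin n) := (Finset.range T).image (fun k => (⇑w)^[k] i) with hC
  have hcardC : C.card = T := by
    rw [hC, Finset.card_image_of_injOn, Finset.card_range]
    rw [Finset.coe_range]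
    exact Function.iterate_injOn_Iio_minimalPeriod
  have hiterT : (⇑w)^[T] i = i := Function.isPeriodicPt_minimalPeriod ⇑w i
  have hmemC : ∀ k, (⇑w)^[k] i ∈ C := by
    intro k
    have h2 : (⇑w)^[k % T + T * (k / T)] i = (⇑w)^[k % T] i := by
      rw [Function.iterate_add_apply]
      congr 1
      rw [mul_comm, Function.iterate_mul]
      exact Function.IsPeriodicPt.iterate hiterT (k / T)
    rw [← Nat.mod_add_div k T, h2]
    exact Finset.mem_image.2 ⟨k % T, Finset.mem_range.2 (Nat.mod_lt _ hTpos), rfl⟩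
  have hstable : ∀ x ∈ C, w x ∈ C := by
    intro x hx
    rcases Finset.mem_image.1 hx with ⟨k, _, rfl⟩
    have h3 : w ((⇑w)^[k] i) = (⇑w)^[k + 1] i := by
      rw [Function.iterate_succ_apply']
    rw [h3]
    exact hmemC (k + 1)
  have hCgood : AltSumAux.Good w C := by
    refine ⟨?_, hstable, by rw [hcardC]; exact hEven⟩
    intro h
    have h4 : i ∈ C := by simpa using hmemC 0
    simp [h] at h4
  have hdich : ∀ A : Finset (Fin n), (∀ x ∈ A, w x ∈ A) → ¬C ⊆ A → Disjoint C A := by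
    intro A hA hCA
    rw [Finset.disjoint_left]
    intro x hxC hxA
    apply hCA
    rcases Finset.mem_image.1 hxC with ⟨k, hk, rfl⟩
    have hiter_mem : ∀ (j : ℕ) (y : Fin n), y ∈ A → (⇑w)^[j] y ∈ A := by
      intro j
      induction j with
      | zero => exact fun y hy => hy
      | succ j ih =>
        intro y hy
        rw [Function.iterate_succ_apply']
        exact hA _ (ih y hy)
    have hiA : i ∈ A := by
      have h5 : (⇑w)^[T - k] ((⇑w)^[k] i) = i := by
        rw [← Function.iterate_add_apply, Nat.sub_add_cancel (le_of_lt (Finset.mem_range.1 hk))]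
        exact hiterT
      rw [← h5]
      exact hiter_mem _ _ hxA
    intro y hy
    rcases Finset.mem_image.1 hy with ⟨j, _, rfl⟩
    exact hiter_mem j i hiA
  -- counting
  set N := Fintype.card (Fin n) with hN
  set S := AltSumAux.validFinset w with hS
  have hsum : ∑ᶠ m : ℕ, ((-1 : ℤ) ^ m * tupleCount w m) =
      ∑ m ∈ Finset.range (N + 1), ((-1 : ℤ) ^ m * tupleCount w m) := by
    apply finsum_eq_sum_of_support_subset
    intro m hm
    simp only [Function.mem_support] at hm
    simp only [Finset.coe_range, Set.mem_Iio]
    by_contra hc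
    push_neg at hc
    apply hm
    have h6 : tupleCount w m = 0 := by
      rw [AltSumAux.tupleCount_eq]
      rw [Finset.card_eq_zero, Finset.filter_eq_empty_iff]
      intro l hl hlen
      have := AltSumAux.valid_length_le (AltSumAux.mem_validFinset.1 hl)
      omega
    simp [h6]
  rw [hsum]
  have hfib : ∀ m ∈ Finset.range (N + 1),
      ((-1 : ℤ) ^ m * tupleCount w m) =
      ∑ l ∈ S.filter (fun l => l.length = m), (-1 : ℤ) ^ l.length := by
    intro m _
    rw [AltSumAux.tupleCount_eq]
    rw [Finset.sum_congr rfl (fun l hl => by rw [(Finset.mem_filter.1 hl).2])]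
    simp [mul_comm, hS]
  rw [Finset.sum_congr rfl hfib]
  rw [Finset.sum_fiberwise_of_maps_to (fun l hl => Finset.mem_range.2
    (Nat.lt_succ_of_le (AltSumAux.valid_length_le (AltSumAux.mem_validFinset.1 hl))))]
  apply Finset.sum_involution (fun l _ => AltSumAux.phi C l)
  · intro l _
    have hlen := AltSumAux.phi_length C l
    rcases hlen with h | h <;> rw [h] <;> ring
  · intro l _ _
    have hlen := AltSumAux.phi_length C l
    intro hc
    rw [hc] at hlen
    omega
  · intro l hl
    exact AltSumAux.mem_validFinset.2
      (AltSumAux.phi_valid hCgood hdich (AltSumAux.mem_validFinset.1 hl))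
  · intro l hl
    exact AltSumAux.phi_involutive hCgood (AltSumAux.mem_validFinset.1 hl)
end

section
/- Fix w \in Sym_n with a cycle C of even length, and let y be the permutation induced by w on the complement of C. With f_m as the number of m-tuples of pairwise disjoint nonempty w-stable even-cardinality subsets, the recursion f_m(w) = m f_{m-1}(y) + (m+1) f_m(y) holds for all m \ge 0, where f_{-1}(y) = 0. -/
open scoped Classical

namespace TupleRec

open Finset Equiv Equiv.Perm

def Good {X : Type*} (u : Equiv.Perm X) {m : ℕ} (A : Fin m → Finset X) : Prop :=
  (Pairwise fun j k => Disjoint (A j) (A k)) ∧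
    ∀ j, A j ≠ ∅ ∧ (∀ x ∈ A j, u x ∈ A j) ∧ Even (A j).card

theorem tupleCount_eq {X : Type*} [Fintype X] (u : Equiv.Perm X) (m : ℕ) :
    tupleCount u m = Nat.card {A : Fin m → Finset X // Good u A} := rfl

theorem good_zero {X : Type*} (u : Equiv.Perm X) (A : Fin 0 → Finset X) : Good u A :=
  ⟨fun i => i.elim0, fun j => j.elim0⟩

theorem tupleCount_zero {X : Type*} [Fintype X] (u : Equiv.Perm X) : tupleCount u 0 = 1 := by
  rw [tupleCount_eq]
  have : Unique {A : Fin 0 → Finset X // Good u A} :=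
    ⟨⟨⟨fun i => i.elim0, good_zero u _⟩⟩, fun a => Subtype.ext (funext fun i => i.elim0)⟩
  exact Nat.card_unique

theorem stable_mem_iff {X : Type*} [DecidableEq X] (u : Equiv.Perm X) {A : Finset X}
    (hA : ∀ x ∈ A, u x ∈ A) (x : X) : x ∈ A ↔ u x ∈ A := by
  have himg : A.image u = A := by
    apply Finset.eq_of_subset_of_card_le
    · intro z hz
      obtain ⟨a, ha, rfl⟩ := Finset.mem_image.1 hz
      exact hA a ha
    · rw [Finset.card_image_of_injective _ u.injective]
  constructor
  · exact hA x
  · intro h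
    rw [← himg] at h
    obtain ⟨a, ha, hax⟩ := Finset.mem_image.1 h
    rwa [← u.injective hax]

theorem stable_zpow {X : Type*} [DecidableEq X] (u : Equiv.Perm X) {A : Finset X}
    (hA : ∀ x ∈ A, u x ∈ A) : ∀ (k : ℤ) (x : X), x ∈ A → (u ^ k) x ∈ A := by
  have h := stable_mem_iff u hA
  intro k
  induction k using Int.induction_on with
  | zero => simpa using fun x hx => hx
  | succ k ih =>
      intro x hx
      have e : (u ^ ((k : ℤ) + 1)) x = (u ^ (k : ℤ)) (u x) := by
        rw [zpow_add_one]; rfl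
      rw [e]
      exact ih (u x) ((h x).1 hx)
  | pred k ih =>
      intro x hx
      have hinv : u⁻¹ x ∈ A := by
        have h2 := h (u⁻¹ x)
        rw [show u (u⁻¹ x) = x from u.apply_symm_apply x] at h2
        exact h2.2 hx
      have e : (u ^ (-(k : ℤ) - 1)) x = (u ^ (-(k : ℤ))) (u⁻¹ x) := by
        rw [zpow_sub_one]; rfl
      rw [e]
      exact ih _ hinv

variable {n : ℕ} {w : Equiv.Perm (Fin n)} {C : Finset (Fin n)}

theorem C_nonempty (hcyc : ∃ i : Fin n, w i ≠ i ∧ C = (w.cycleOf i).support) : C.Nonempty := by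
  obtain ⟨i, hi, rfl⟩ := hcyc
  exact ⟨i, Equiv.Perm.mem_support_cycleOf_iff.2
    ⟨Equiv.Perm.SameCycle.refl _ _, Equiv.Perm.mem_support.2 hi⟩⟩

theorem dichotomy (hcyc : ∃ i : Fin n, w i ≠ i ∧ C = (w.cycleOf i).support)
    {A : Finset (Fin n)} (hA : ∀ x ∈ A, w x ∈ A) : Disjoint A C ∨ C ⊆ A := by
  by_cases hd : Disjoint A C
  · exact Or.inl hd
  · right
    obtain ⟨x, hxA, hxC⟩ := Finset.not_disjoint_iff.1 hd
    obtain ⟨i, hi, rfl⟩ := hcyc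
    intro c hc
    have h1 := (Equiv.Perm.mem_support_cycleOf_iff.1 hxC).1
    have h2 := (Equiv.Perm.mem_support_cycleOf_iff.1 hc).1
    obtain ⟨k, hk⟩ := h1.symm.trans h2
    exact hk ▸ stable_zpow w hA k x hxA

theorem mem_C_iff (hstab : ∀ x : Fin n, x ∉ C ↔ w x ∉ C) (x : Fin n) :
    x ∈ C ↔ w x ∈ C := not_iff_not.1 (hstab x)

/-- embed a finset of the complement subtype into `Fin n`. -/
def emb (C : Finset (Fin n)) (B : Finset {x : Fin n // x ∉ C}) : Finset (Fin n) :=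
  B.map (Function.Embedding.subtype _)

/-- restrict a finset of `Fin n` to the complement subtype. -/
def res (C : Finset (Fin n)) (A : Finset (Fin n)) : Finset {x : Fin n // x ∉ C} :=
  A.subtype _

@[simp] theorem mem_res {A : Finset (Fin n)} {x : {x : Fin n // x ∉ C}} :
    x ∈ res C A ↔ (x : Fin n) ∈ A := Finset.mem_subtype

theorem mem_emb {B : Finset {x : Fin n // x ∉ C}} {x : Fin n} :
    x ∈ emb C B ↔ ∃ h : x ∉ C, ⟨x, h⟩ ∈ B := by
  simp only [emb, Finset.mem_map, Function.Embedding.coe_subtype]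
  constructor
  · rintro ⟨⟨a, ha⟩, haB, rfl⟩
    exact ⟨ha, haB⟩
  · rintro ⟨h, hB⟩
    exact ⟨⟨x, h⟩, hB, rfl⟩

theorem emb_disjoint (B : Finset {x : Fin n // x ∉ C}) : Disjoint (emb C B) C := by
  rw [Finset.disjoint_left]
  rintro x hx hxC
  obtain ⟨h, -⟩ := mem_emb.1 hx
  exact h hxC

@[simp] theorem res_emb (B : Finset {x : Fin n // x ∉ C}) : res C (emb C B) = B := by
  ext ⟨x, hx⟩
  rw [mem_res, mem_emb]
  exact ⟨fun ⟨h, hB⟩ => hB, fun hB => ⟨hx, hB⟩⟩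

theorem emb_res {A : Finset (Fin n)} (h : Disjoint A C) : emb C (res C A) = A :=
  Finset.subtype_map_of_mem fun x hx => Finset.disjoint_left.1 h hx

@[simp] theorem card_emb (B : Finset {x : Fin n // x ∉ C}) : (emb C B).card = B.card :=
  Finset.card_map _

theorem card_res {A : Finset (Fin n)} (h : Disjoint A C) : (res C A).card = A.card := by
  rw [res, Finset.card_subtype, Finset.filter_true_of_mem fun x hx => Finset.disjoint_left.1 h hx]

theorem emb_eq_empty {B : Finset {x : Fin n // x ∉ C}} : emb C B = ∅ ↔ B = ∅ :=
  Finset.map_eq_empty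

theorem emb_ne_empty {B : Finset {x : Fin n // x ∉ C}} (h : B ≠ ∅) : emb C B ≠ ∅ :=
  fun he => h (emb_eq_empty.1 he)

theorem disjoint_emb {B₁ B₂ : Finset {x : Fin n // x ∉ C}} :
    Disjoint (emb C B₁) (emb C B₂) ↔ Disjoint B₁ B₂ := Finset.disjoint_map _

theorem res_disjoint {A₁ A₂ : Finset (Fin n)} (h : Disjoint A₁ A₂) :
    Disjoint (res C A₁) (res C A₂) := by
  rw [Finset.disjoint_left] at h ⊢
  intro a ha hb
  exact h (mem_res.1 ha) (mem_res.1 hb)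

theorem stable_res (hstab : ∀ x : Fin n, x ∉ C ↔ w x ∉ C) {A : Finset (Fin n)}
    (hA : ∀ x ∈ A, w x ∈ A) :
    ∀ a ∈ res C A, (w.subtypePerm (p := fun x => x ∉ C) fun x => (hstab x).symm) a ∈ res C A := by
  rintro ⟨x, hx⟩ ha
  rw [mem_res] at ha ⊢
  exact hA x ha

theorem stable_emb (hstab : ∀ x : Fin n, x ∉ C ↔ w x ∉ C) {B : Finset {x : Fin n // x ∉ C}}
    (hB : ∀ a ∈ B, (w.subtypePerm (p := fun x => x ∉ C) fun x => (hstab x).symm) a ∈ B) :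
    ∀ x ∈ emb C B, w x ∈ emb C B := by
  intro x hx
  obtain ⟨h, hB'⟩ := mem_emb.1 hx
  rw [mem_emb]
  exact ⟨(hstab x).1 h, hB _ hB'⟩

theorem good_res (hstab : ∀ x : Fin n, x ∉ C ↔ w x ∉ C) {m : ℕ} {A : Fin m → Finset (Fin n)}
    (hA : Good w A) (hd : ∀ k, Disjoint (A k) C) :
    Good (w.subtypePerm (p := fun x => x ∉ C) fun x => (hstab x).symm) (fun k => res C (A k)) := by
  refine ⟨fun j k hjk => res_disjoint (hA.1 hjk), fun k => ⟨?_, stable_res hstab (hA.2 k).2.1, ?_⟩⟩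
  · show res C (A k) ≠ ∅
    rw [Ne, ← Finset.card_eq_zero, card_res (hd k), Finset.card_eq_zero]
    exact (hA.2 k).1
  · show Even (res C (A k)).card
    rw [card_res (hd k)]
    exact (hA.2 k).2.2

theorem good_emb (hstab : ∀ x : Fin n, x ∉ C ↔ w x ∉ C) {m : ℕ}
    {B : Fin m → Finset {x : Fin n // x ∉ C}} (hB : Good (w.subtypePerm (p := fun x => x ∉ C) fun x => (hstab x).symm) B) :
    Good w (fun k => emb C (B k)) := by
  refine ⟨fun j k hjk => disjoint_emb.2 (hB.1 hjk),
    fun k => ⟨emb_ne_empty (hB.2 k).1, stable_emb hstab (hB.2 k).2.1, ?_⟩⟩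
  rw [card_emb]
  exact (hB.2 k).2.2

theorem good_union (heven : Even C.card) (hstab : ∀ x : Fin n, x ∉ C ↔ w x ∉ C) {m : ℕ} {B : Fin m → Finset {x : Fin n // x ∉ C}}
    (hB : Good (w.subtypePerm (p := fun x => x ∉ C) fun x => (hstab x).symm) B) (j : Fin m) :
    Good w (fun k => if k = j then C ∪ emb C (B j) else emb C (B k)) := by
  have hG := good_emb hstab hB
  constructor
  · intro a b hab
    dsimp only
    rcases eq_or_ne a j with rfl | ha
    · rw [if_pos rfl, if_neg (Ne.symm hab)]
      exact Finset.disjoint_union_left.2 ⟨(emb_disjoint (B b)).symm, hG.1 hab⟩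
    · rw [if_neg ha]
      rcases eq_or_ne b j with rfl | hb
      · rw [if_pos rfl]
        exact (Finset.disjoint_union_left.2 ⟨(emb_disjoint (B a)).symm, hG.1 hab.symm⟩).symm
      · rw [if_neg hb]
        exact hG.1 hab
  · intro k
    dsimp only
    rcases eq_or_ne k j with rfl | hk
    · rw [if_pos rfl]
      refine ⟨?_, ?_, ?_⟩
      · intro he
        exact emb_ne_empty (hB.2 k).1 (Finset.union_eq_empty.1 he).2
      · intro x hx
        rcases Finset.mem_union.1 hx with hx | hx
        · exact Finset.mem_union_left _ ((mem_C_iff hstab x).1 hx)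
        · exact Finset.mem_union_right _ (stable_emb hstab (hB.2 k).2.1 x hx)
      · rw [Finset.card_union_of_disjoint (emb_disjoint (B k)).symm, card_emb]
        exact heven.add (hB.2 k).2.2
    · rw [if_neg hk]
      exact hG.2 k

theorem good_insert (hcyc : ∃ i : Fin n, w i ≠ i ∧ C = (w.cycleOf i).support)
    (heven : Even C.card) (hstab : ∀ x : Fin n, x ∉ C ↔ w x ∉ C) {m : ℕ} {B : Fin m → Finset {x : Fin n // x ∉ C}}
    (hB : Good (w.subtypePerm (p := fun x => x ∉ C) fun x => (hstab x).symm) B) (j : Fin (m + 1)) :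
    Good w (j.insertNth C (fun i => emb C (B i))) := by
  have hG := good_emb hstab hB
  have hcase : ∀ k : Fin (m + 1), k = j ∨ ∃ i, j.succAbove i = k := by
    intro k
    rcases eq_or_ne k j with rfl | hk
    · exact Or.inl rfl
    · exact Or.inr (Fin.exists_succAbove_eq hk)
  constructor
  · intro a b hab
    rcases hcase a with rfl | ⟨i, rfl⟩
    · rcases hcase b with rfl | ⟨i', rfl⟩
      · exact absurd rfl hab
      · rw [Fin.insertNth_apply_same, Fin.insertNth_apply_succAbove]
        exact (emb_disjoint (B i')).symm
    · rcases hcase b with rfl | ⟨i', rfl⟩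
      · rw [Fin.insertNth_apply_same, Fin.insertNth_apply_succAbove]
        exact emb_disjoint (B i)
      · rw [Fin.insertNth_apply_succAbove, Fin.insertNth_apply_succAbove]
        exact hG.1 (fun h => hab (congrArg _ h))
  · intro k
    rcases hcase k with rfl | ⟨i, rfl⟩
    · rw [Fin.insertNth_apply_same]
      refine ⟨Finset.nonempty_iff_ne_empty.1 (C_nonempty hcyc), fun x hx => (mem_C_iff hstab x).1 hx, heven⟩
    · rw [Fin.insertNth_apply_succAbove]
      exact hG.2 i

theorem subset_unique (hcyc : ∃ i : Fin n, w i ≠ i ∧ C = (w.cycleOf i).support) {m : ℕ} {A : Fin m → Finset (Fin n)} (hA : Good w A)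
    {j k : Fin m} (hj : C ⊆ A j) (hk : C ⊆ A k) : j = k := by
  by_contra hne
  obtain ⟨c, hc⟩ := C_nonempty hcyc
  exact (Finset.disjoint_left.1 (hA.1 hne) (hj hc)) (hk hc)

theorem disjoint_of_not_subset (hcyc : ∃ i : Fin n, w i ≠ i ∧ C = (w.cycleOf i).support) {A : Finset (Fin n)} (hA : ∀ x ∈ A, w x ∈ A)
    (h : ¬ C ⊆ A) : Disjoint A C := (dichotomy hcyc hA).resolve_right h

theorem good_sdiff (hcyc : ∃ i : Fin n, w i ≠ i ∧ C = (w.cycleOf i).support)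
    (heven : Even C.card) (hstab : ∀ x : Fin n, x ∉ C ↔ w x ∉ C) {m : ℕ} {A : Fin m → Finset (Fin n)} (hA : Good w A)
    {j : Fin m} (hj : C ⊆ A j) (hne : A j ≠ C) :
    Good (w.subtypePerm (p := fun x => x ∉ C) fun x => (hstab x).symm) (fun k => res C (A k \ C)) := by
  have hdk : ∀ k, k ≠ j → Disjoint (A k) C := by
    intro k hk
    refine disjoint_of_not_subset hcyc (hA.2 k).2.1 fun hsub => hk ?_
    exact subset_unique hcyc hA hsub hj
  have hAd : ∀ k, A k \ C = if k = j then A j \ C else A k := by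
    intro k
    rcases eq_or_ne k j with rfl | hk
    · rw [if_pos rfl]
    · rw [if_neg hk, Finset.sdiff_eq_self_iff_disjoint.2 (hdk k hk)]
  refine good_res hstab ⟨?_, ?_⟩ (fun k => Finset.sdiff_disjoint)
  · exact fun a b hab => (hA.1 hab).mono (Finset.sdiff_subset) (Finset.sdiff_subset)
  · intro k
    refine ⟨?_, ?_, ?_⟩
    · show A k \ C ≠ ∅
      rw [hAd k]
      rcases eq_or_ne k j with rfl | hk
      · rw [if_pos rfl, ← Finset.nonempty_iff_ne_empty, Finset.sdiff_nonempty]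
        intro hsub
        exact hne (Finset.Subset.antisymm hsub hj)
      · rw [if_neg hk]
        exact (hA.2 k).1
    · intro x hx
      rcases Finset.mem_sdiff.1 hx with ⟨hxA, hxC⟩
      exact Finset.mem_sdiff.2 ⟨(hA.2 k).2.1 x hxA, (hstab x).1 hxC⟩
    · show Even (A k \ C).card
      rw [hAd k]
      rcases eq_or_ne k j with rfl | hk
      · rw [if_pos rfl, Finset.card_sdiff_of_subset hj, Nat.even_sub (Finset.card_le_card hj)]
        exact iff_of_true (hA.2 k).2.2 heven
      · rw [if_neg hk]
        exact (hA.2 k).2.2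

theorem good_succAbove (hcyc : ∃ i : Fin n, w i ≠ i ∧ C = (w.cycleOf i).support)
    (hstab : ∀ x : Fin n, x ∉ C ↔ w x ∉ C) {m : ℕ} {A : Fin (m + 1) → Finset (Fin n)} (hA : Good w A)
    {j : Fin (m + 1)} (hj : A j = C) :
    Good (w.subtypePerm (p := fun x => x ∉ C) fun x => (hstab x).symm) (fun i => res C (A (j.succAbove i))) := by
  refine good_res hstab ⟨?_, fun i => hA.2 _⟩ ?_
  · exact fun a b hab => hA.1 (fun h => hab (Fin.succAbove_right_injective h))
  · intro i
    refine disjoint_of_not_subset hcyc (hA.2 _).2.1 fun hsub => ?_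
    have hCj : C ⊆ A j := by rw [hj]
    have := subset_unique hcyc hA hsub hCj
    exact Fin.succAbove_ne j i this

theorem not_subset_emb (hcyc : ∃ i : Fin n, w i ≠ i ∧ C = (w.cycleOf i).support)
    (B : Finset {x : Fin n // x ∉ C}) : ¬ C ⊆ emb C B := by
  obtain ⟨c, hc⟩ := C_nonempty hcyc
  intro hs
  exact Finset.disjoint_left.1 (emb_disjoint B) (hs hc) hc

section Main

variable (hcyc : ∃ i : Fin n, w i ≠ i ∧ C = (w.cycleOf i).support)
  (heven : Even C.card) (hstab : ∀ x : Fin n, x ∉ C ↔ w x ∉ C) (m' : ℕ)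

/-- The disjoint union indexing the decomposition. -/
abbrev Src : Type _ :=
  {B : Fin (m' + 1) → Finset {x : Fin n // x ∉ C} // Good (w.subtypePerm (p := fun x => x ∉ C) fun x => (hstab x).symm) B} ⊕
    (Fin (m' + 1) ×
      {B : Fin (m' + 1) → Finset {x : Fin n // x ∉ C} // Good (w.subtypePerm (p := fun x => x ∉ C) fun x => (hstab x).symm) B}) ⊕
    (Fin (m' + 1) × {B : Fin m' → Finset {x : Fin n // x ∉ C} // Good (w.subtypePerm (p := fun x => x ∉ C) fun x => (hstab x).symm) B})

noncomputable def F : Src hstab m' → {A : Fin (m' + 1) → Finset (Fin n) // Good w A} :=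
  Sum.elim
    (fun B => ⟨fun k => emb C (B.1 k), good_emb hstab B.2⟩)
    (Sum.elim
      (fun p => ⟨fun k => if k = p.1 then C ∪ emb C (p.2.1 p.1) else emb C (p.2.1 k),
        good_union heven hstab p.2.2 p.1⟩)
      (fun p => ⟨p.1.insertNth C (fun i => emb C (p.2.1 i)),
        good_insert hcyc heven hstab p.2.2 p.1⟩))

noncomputable def G0 (A : Fin (m' + 1) → Finset (Fin n)) (hA : Good w A) :
    Src hstab m' :=
  if h : ∃ j, C ⊆ A j then
    if h2 : A h.choose = C then
      Sum.inr (Sum.inr (h.choose, ⟨fun i => res C (A (h.choose.succAbove i)),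
        good_succAbove hcyc hstab hA h2⟩))
    else
      Sum.inr (Sum.inl (h.choose, ⟨fun k => res C (A k \ C),
        good_sdiff hcyc heven hstab hA h.choose_spec h2⟩))
  else
    Sum.inl ⟨fun k => res C (A k),
      good_res hstab hA fun k =>
        disjoint_of_not_subset hcyc (hA.2 k).2.1 fun hs => h ⟨k, hs⟩⟩

theorem GF : ∀ s : Src hstab m',
    G0 hcyc heven hstab m' (F hcyc heven hstab m' s).1 (F hcyc heven hstab m' s).2 = s := by
  rintro (⟨B, hB⟩ | ⟨j, B, hB⟩ | ⟨j, B, hB⟩)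
  · show G0 hcyc heven hstab m' (fun k => emb C (B k)) _ = _
    unfold G0
    rw [dif_neg]
    · exact congrArg Sum.inl (Subtype.ext (funext fun k => res_emb (B k)))
    · rintro ⟨j, hj⟩
      exact not_subset_emb hcyc (B j) hj
  · show G0 hcyc heven hstab m'
      (fun k => if k = j then C ∪ emb C (B j) else emb C (B k)) _ = _
    have hex : ∃ k, C ⊆ (fun k => if k = j then C ∪ emb C (B j) else emb C (B k)) k :=
      ⟨j, by simp only [if_pos rfl]; exact Finset.subset_union_left⟩
    have hch : hex.choose = j := by
      by_contra hne
      have hspec := hex.choose_spec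
      simp only [if_neg hne] at hspec
      exact not_subset_emb hcyc _ hspec
    have hne2 : (fun k => if k = j then C ∪ emb C (B j) else emb C (B k)) hex.choose ≠ C := by
      rw [hch]
      show (if j = j then C ∪ emb C (B j) else emb C (B j)) ≠ C
      rw [if_pos rfl]
      intro he
      have hsub : emb C (B j) ⊆ C := Finset.subset_union_right.trans he.le
      have hempty : emb C (B j) = ∅ :=
        Finset.eq_empty_of_forall_notMem fun x hx =>
          Finset.disjoint_left.1 (emb_disjoint (B j)) hx (hsub hx)
      exact (hB.2 j).1 (emb_eq_empty.1 hempty)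
    unfold G0
    rw [dif_pos hex, dif_neg hne2]
    refine congrArg _ (congrArg _ (Prod.ext hch (Subtype.ext (funext fun k => ?_))))
    show res C ((if k = j then C ∪ emb C (B j) else emb C (B k)) \ C) = B k
    rcases eq_or_ne k j with rfl | hk
    · rw [if_pos rfl, Finset.union_sdiff_left,
        Finset.sdiff_eq_self_iff_disjoint.2 (emb_disjoint (B k)), res_emb]
    · rw [if_neg hk, Finset.sdiff_eq_self_iff_disjoint.2 (emb_disjoint (B k)), res_emb]
  · show G0 hcyc heven hstab m' (j.insertNth C (fun i => emb C (B i))) _ = _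
    have heq : (j.insertNth C (fun i => emb C (B i)) :
        Fin (m' + 1) → Finset (Fin n)) j = C := by
      rw [Fin.insertNth_apply_same]
    have hex : ∃ k, C ⊆ (j.insertNth C (fun i => emb C (B i)) :
        Fin (m' + 1) → Finset (Fin n)) k := ⟨j, le_of_eq heq.symm⟩
    have hch : hex.choose = j := by
      by_contra hne
      obtain ⟨i, hi⟩ := Fin.exists_succAbove_eq hne
      have hspec := hex.choose_spec
      rw [← hi, Fin.insertNth_apply_succAbove] at hspec
      exact not_subset_emb hcyc _ hspec
    have h2 : (j.insertNth C (fun i => emb C (B i)) :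
        Fin (m' + 1) → Finset (Fin n)) hex.choose = C := by rw [hch, heq]
    unfold G0
    rw [dif_pos hex, dif_pos h2]
    refine congrArg _ (congrArg _ (Prod.ext hch (Subtype.ext (funext fun i => ?_))))
    show res C ((j.insertNth C (fun i => emb C (B i)) :
        Fin (m' + 1) → Finset (Fin n)) (hex.choose.succAbove i)) = B i
    rw [hch, Fin.insertNth_apply_succAbove, res_emb]

theorem FG : ∀ t : {A : Fin (m' + 1) → Finset (Fin n) // Good w A},
    F hcyc heven hstab m' (G0 hcyc heven hstab m' t.1 t.2) = t := by
  rintro ⟨A, hA⟩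
  show F hcyc heven hstab m' (G0 hcyc heven hstab m' A hA) = _
  by_cases h : ∃ j, C ⊆ A j
  · have hdisj : ∀ k, k ≠ h.choose → Disjoint (A k) C := by
      intro k hk
      refine disjoint_of_not_subset hcyc (hA.2 k).2.1 fun hsub => hk ?_
      exact subset_unique hcyc hA hsub h.choose_spec
    by_cases h2 : A h.choose = C
    · rw [G0, dif_pos h, dif_pos h2]
      apply Subtype.ext
      show h.choose.insertNth C (fun i => emb C (res C (A (h.choose.succAbove i)))) = A
      funext k
      rcases eq_or_ne k h.choose with rfl | hk
      · rw [Fin.insertNth_apply_same]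
        exact h2.symm
      · obtain ⟨i, rfl⟩ := Fin.exists_succAbove_eq hk
        rw [Fin.insertNth_apply_succAbove]
        exact emb_res (hdisj _ (Fin.succAbove_ne _ _))
    · rw [G0, dif_pos h, dif_neg h2]
      apply Subtype.ext
      funext k
      show (if k = h.choose then C ∪ emb C (res C (A h.choose \ C))
          else emb C (res C (A k \ C))) = A k
      rcases eq_or_ne k h.choose with rfl | hk
      · rw [if_pos rfl, emb_res Finset.sdiff_disjoint,
          Finset.union_sdiff_of_subset h.choose_spec]
      · rw [if_neg hk, emb_res Finset.sdiff_disjoint,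
          Finset.sdiff_eq_self_iff_disjoint.2 (hdisj k hk)]
  · rw [G0, dif_neg h]
    apply Subtype.ext
    funext k
    show emb C (res C (A k)) = A k
    exact emb_res (disjoint_of_not_subset hcyc (hA.2 k).2.1 fun hs => h ⟨k, hs⟩)

end Main

theorem key (hcyc : ∃ i : Fin n, w i ≠ i ∧ C = (w.cycleOf i).support)
    (heven : Even C.card) (hstab : ∀ x : Fin n, x ∉ C ↔ w x ∉ C) (m' : ℕ) :
    tupleCount w (m' + 1) =
      (m' + 1) * tupleCount (w.subtypePerm (p := fun x => x ∉ C) fun x => (hstab x).symm) m' +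
        (m' + 1 + 1) * tupleCount (w.subtypePerm (p := fun x => x ∉ C) fun x => (hstab x).symm) (m' + 1) := by
  have e : Src hstab m' ≃ {A : Fin (m' + 1) → Finset (Fin n) // Good w A} :=
    ⟨F hcyc heven hstab m', fun t => G0 hcyc heven hstab m' t.1 t.2,
      GF hcyc heven hstab m', FG hcyc heven hstab m'⟩
  rw [tupleCount_eq, tupleCount_eq, tupleCount_eq, ← Nat.card_congr e]
  have hfin : Nat.card (Fin (m' + 1)) = m' + 1 := by
    simp [Nat.card_eq_fintype_card]
  rw [Src, Nat.card_sum, Nat.card_sum, Nat.card_prod, Nat.card_prod, hfin]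
  ring

end TupleRec

/-- Let `C` be the support of an even-length cycle of `w ∈ Sym_n`, and let `y` be the
permutation induced by `w` on the complement of `C`.  Then
`f_m(w) = m f_{m-1}(y) + (m+1) f_m(y)` for all `m ≥ 0` (with `f_{-1}(y) = 0`). -/
theorem tupleCount_recursion {n : ℕ} (w : Equiv.Perm (Fin n)) (C : Finset (Fin n))
    (hcyc : ∃ i : Fin n, w i ≠ i ∧ C = (w.cycleOf i).support)
    (heven : Even C.card)
    (hstab : ∀ x : Fin n, x ∉ C ↔ w x ∉ C) (m : ℕ) :
    tupleCount w m =
      m * tupleCount (w.subtypePerm (p := fun x => x ∉ C) fun x => (hstab x).symm) (m - 1) +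
        (m + 1) * tupleCount (w.subtypePerm (p := fun x => x ∉ C) fun x => (hstab x).symm) m := by
  cases m with
  | zero => simp [TupleRec.tupleCount_zero]
  | succ m' => exact TupleRec.key hcyc heven hstab m'
end
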